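/- arXiv:1510.02533 — 6 statements merged into one kernel-verified Lean document; each statement's English description precedes it below -/
import Mathlib

section
/- Let f(x) = (1/n)∑_{i=1}^n f_i(x) where each f_i : ℝ^d → ℝ is differentiable, L-smooth and μ-strongly convex with 0 < μ < L. Then for all x, y ∈ ℝ^d: ⟨∇f(x), y − x⟩ ≤ ((L − μ)/L)[f(y) − f(x)] − (μ/2)‖y − x‖² − (1/(2Ln))∑_{i=1}^n ‖∇f_i(y) − ∇f_i(x)‖² − (μ/L)⟨∇f(y), x − y⟩. -/
open scoped RealInnerProductSpace

variable {E : Type*} [NormedAddCommGroup E] [InnerProductSpace ℝ E] [CompleteSpace E]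

lemma descent_lemma (f : E → ℝ) (f' : E → E) (hf : ∀ x, HasGradientAt f (f' x) x)
    (L : ℝ) (hL : 0 ≤ L) (lip : ∀ a b, ‖f' a - f' b‖ ≤ L * ‖a - b‖) (a b : E) :
    f b ≤ f a + ⟪f' a, b - a⟫ + L / 2 * ‖b - a‖ ^ 2 := by
  set v := b - a with hv
  -- φ t = f (a + t • v)
  have hline : ∀ t : ℝ, HasDerivAt (fun t : ℝ => a + t • v) v t := by
    intro t
    simpa using ((hasDerivAt_id t).smul_const v).const_add a
  have hφ : ∀ t : ℝ, HasDerivAt (fun t : ℝ => f (a + t • v)) ⟪f' (a + t • v), v⟫ t := by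
    intro t
    have hF := (hf (a + t • v)).hasFDerivAt
    have := hF.comp_hasDerivAt t (hline t)
    exact this
  have hψ : ∀ t : ℝ, HasDerivAt
      (fun t : ℝ => f (a + t • v) - t * ⟪f' a, v⟫ - L / 2 * t ^ 2 * ‖v‖ ^ 2)
      (⟪f' (a + t • v), v⟫ - ⟪f' a, v⟫ - L * t * ‖v‖ ^ 2) t := by
    intro t
    have h1 := (hφ t).sub (((hasDerivAt_id t).mul_const ⟪f' a, v⟫))
    have h2 : HasDerivAt (fun t : ℝ => L / 2 * t ^ 2 * ‖v‖ ^ 2) (L * t * ‖v‖ ^ 2) t := by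
      have := ((hasDerivAt_pow 2 t).const_mul (L / 2)).mul_const (‖v‖ ^ 2)
      exact this.congr_deriv (by ring)
    exact (h1.sub h2).congr_deriv (by rw [one_mul])
  have key : ∀ t ∈ Set.Icc (0:ℝ) 1,
      (⟪f' (a + t • v), v⟫ - ⟪f' a, v⟫ - L * t * ‖v‖ ^ 2) ≤ 0 := by
    intro t ht
    have h1 : ⟪f' (a + t • v) - f' a, v⟫ ≤ ‖f' (a + t • v) - f' a‖ * ‖v‖ :=
      real_inner_le_norm _ _
    have h2 : ‖f' (a + t • v) - f' a‖ ≤ L * (t * ‖v‖) := by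
      have := lip (a + t • v) a
      simpa [norm_smul, abs_of_nonneg ht.1, mul_assoc] using this
    have h3 : ⟪f' (a + t • v) - f' a, v⟫ = ⟪f' (a + t • v), v⟫ - ⟪f' a, v⟫ :=
      inner_sub_left _ _ _
    nlinarith [norm_nonneg v, mul_le_mul_of_nonneg_right h2 (norm_nonneg v)]
  -- antitone on [0,1]
  have mono : AntitoneOn (fun t : ℝ => f (a + t • v) - t * ⟪f' a, v⟫ - L / 2 * t ^ 2 * ‖v‖ ^ 2)
      (Set.Icc 0 1) := by
    apply antitoneOn_of_deriv_nonpos (convex_Icc 0 1)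
    · exact Continuous.continuousOn (continuous_iff_continuousAt.mpr fun t => (hψ t).continuousAt)
    · intro t ht
      exact (hψ t).differentiableAt.differentiableWithinAt
    · intro t ht
      rw [(hψ t).deriv]
      rw [interior_Icc] at ht
      exact key t ⟨ht.1.le, ht.2.le⟩
  have h01 := mono (Set.left_mem_Icc.mpr zero_le_one) (Set.right_mem_Icc.mpr zero_le_one) zero_le_one
  simp only [zero_smul, add_zero, one_smul, zero_mul, mul_zero, zero_pow, sub_zero] at h01
  have : a + v = b := by rw [hv]; abel
  rw [this] at h01
  nlinarith [h01]

lemma saga_arith (μ L : ℝ) (hμ : 0 < μ) (hL : 0 < L) (hLμ : 0 < L - μ)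
    (Fx Fy p q nd nv ng : ℝ)
    (star : Fy - Fx - p ≥ μ / 2 * nv + (L - μ)⁻¹ / 2 * ng)
    (hΔ : nd = ng + 2 * μ * (q - p) - μ ^ 2 * nv) :
    p ≤ (L - μ) / L * (Fy - Fx) - μ / 2 * nv - 1 / (2 * L) * nd - μ / L * (-q) := by
  have hc1 : (L - μ) * (L - μ)⁻¹ = 1 := mul_inv_cancel₀ hLμ.ne'
  have h2 := mul_le_mul_of_nonneg_left star hLμ.le
  rw [← sub_nonneg]
  have expand : (L - μ) / L * (Fy - Fx) - μ / 2 * nv - 1 / (2 * L) * nd - μ / L * (-q) - p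
      = (1 / L) * ((L - μ) * (Fy - Fx - p)
          - (L - μ) * (μ / 2 * nv + (L - μ)⁻¹ / 2 * ng)
          + ((L - μ) * (L - μ)⁻¹ / 2 - 1 / 2) * ng) := by
    rw [hΔ]
    field_simp
    ring
  rw [expand, hc1]
  norm_num
  apply mul_nonneg (by positivity)
  linarith [h2]

lemma key_ineq (μ L : ℝ) (hμ : 0 < μ) (hμL : μ < L) (f : E → ℝ) (f' : E → E)
    (hdes : ∀ a b, f b ≤ f a + ⟪f' a, b - a⟫ + L / 2 * ‖b - a‖ ^ 2)
    (hsc : ∀ a b, f a ≥ f b + ⟪f' b, a - b⟫ + μ / 2 * ‖a - b‖ ^ 2)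
    (x y : E) :
    ⟪f' x, y - x⟫ ≤ (L - μ) / L * (f y - f x) - μ / 2 * ‖y - x‖ ^ 2
      - 1 / (2 * L) * ‖f' y - f' x‖ ^ 2 - μ / L * ⟪f' y, x - y⟫ := by
  have hL : (0:ℝ) < L := hμ.trans hμL
  have hLμ : (0:ℝ) < L - μ := sub_pos.mpr hμL
  set c := (L - μ)⁻¹ with hcdef
  set v := y - x with hv
  set g := f' y - f' x - μ • v with hg
  set z := y - c • g with hz
  have h1 := hsc z x
  have h2 := hdes y z
  have ezx : z - x = v - c • g := by rw [hz, hv]; abel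
  have ezy : z - y = -(c • g) := by rw [hz]; abel
  rw [ezx] at h1
  rw [ezy] at h2
  have e1 : ⟪f' x, v - c • g⟫ = ⟪f' x, v⟫ - c * ⟪f' x, g⟫ := by
    rw [inner_sub_right, real_inner_smul_right]
  have e2 : ‖v - c • g‖ ^ 2 = ‖v‖ ^ 2 - 2 * (c * ⟪v, g⟫) + c ^ 2 * ‖g‖ ^ 2 := by
    rw [norm_sub_sq_real, real_inner_smul_right, norm_smul, Real.norm_eq_abs,
      abs_of_nonneg (inv_nonneg.mpr hLμ.le)]
    ring
  have e3 : ⟪f' y, -(c • g)⟫ = -(c * ⟪f' y, g⟫) := by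
    rw [inner_neg_right, real_inner_smul_right]
  have e4 : ‖-(c • g)‖ ^ 2 = c ^ 2 * ‖g‖ ^ 2 := by
    rw [norm_neg, norm_smul, Real.norm_eq_abs, abs_of_nonneg (inv_nonneg.mpr hLμ.le)]
    ring
  have e5 : c * ⟪f' y, g⟫ - c * ⟪f' x, g⟫ - c * (μ * ⟪v, g⟫) = c * ‖g‖ ^ 2 := by
    have : ⟪f' y, g⟫ - ⟪f' x, g⟫ - μ * ⟪v, g⟫ = ‖g‖ ^ 2 := by
      rw [← real_inner_self_eq_norm_sq, hg]
      simp only [inner_sub_left, real_inner_smul_left]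
    rw [← this]; ring
  have ec2 : L / 2 * (c ^ 2 * ‖g‖ ^ 2) - μ / 2 * (c ^ 2 * ‖g‖ ^ 2) = c / 2 * ‖g‖ ^ 2 := by
    have : (L - μ) * c ^ 2 = c := by
      rw [hcdef]; field_simp
    nlinarith [this]
  rw [e1, e2] at h1
  rw [e3, e4] at h2
  have star : f y - f x - ⟪f' x, v⟫ ≥ μ / 2 * ‖v‖ ^ 2 + c / 2 * ‖g‖ ^ 2 := by
    nlinarith [h1, h2, e5, ec2]
  -- final algebra
  have hΔ : ‖f' y - f' x‖ ^ 2
      = ‖g‖ ^ 2 + 2 * μ * (⟪f' y, v⟫ - ⟪f' x, v⟫) - μ ^ 2 * ‖v‖ ^ 2 := by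
    have hd : f' y - f' x = g + μ • v := by rw [hg]; abel
    rw [hd, norm_add_sq_real, real_inner_smul_right, norm_smul, Real.norm_eq_abs,
      abs_of_nonneg hμ.le]
    have : ⟪g, v⟫ = ⟪f' y, v⟫ - ⟪f' x, v⟫ - μ * ‖v‖ ^ 2 := by
      rw [hg]
      simp only [inner_sub_left, real_inner_smul_left, real_inner_self_eq_norm_sq]
    rw [this]; ring
  have hq : ⟪f' y, x - y⟫ = -⟪f' y, v⟫ := by
    rw [show x - y = -v by rw [hv]; abel, inner_neg_right]
  rw [hq]
  exact saga_arith μ L hμ hL hLμ (f x) (f y) ⟪f' x, v⟫ ⟪f' y, v⟫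
    (‖f' y - f' x‖ ^ 2) (‖v‖ ^ 2) (‖g‖ ^ 2) star hΔ

theorem saga_inner_product_bound (d n : ℕ) (hn : 1 ≤ n) (μ L : ℝ)
    (hμ : 0 < μ) (hμL : μ < L)
    (f : Fin n → EuclideanSpace ℝ (Fin d) → ℝ)
    (f' : Fin n → EuclideanSpace ℝ (Fin d) → EuclideanSpace ℝ (Fin d))
    (hgrad : ∀ i x, HasGradientAt (f i) (f' i x) x)
    (hsmooth : ∀ i x y, ‖f' i x - f' i y‖ ≤ L * ‖x - y‖)
    (hsc : ∀ i x y, f i x ≥ f i y + ⟪f' i y, x - y⟫ + μ / 2 * ‖x - y‖ ^ 2)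
    (x y : EuclideanSpace ℝ (Fin d)) :
    ⟪(1 / (n : ℝ)) • ∑ i, f' i x, y - x⟫ ≤
      (L - μ) / L * ((1 / (n : ℝ)) * ∑ i, f i y - (1 / (n : ℝ)) * ∑ i, f i x)
      - μ / 2 * ‖y - x‖ ^ 2
      - (1 / (2 * L * n)) * ∑ i, ‖f' i y - f' i x‖ ^ 2
      - μ / L * ⟪(1 / (n : ℝ)) • ∑ i, f' i y, x - y⟫ := by
  have hL : (0:ℝ) < L := hμ.trans hμL
  have hnpos : (0:ℝ) < (n:ℝ) := by exact_mod_cast hn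
  have hkey : ∀ i : Fin n, ⟪f' i x, y - x⟫ ≤ (L - μ) / L * (f i y - f i x)
      - μ / 2 * ‖y - x‖ ^ 2 - 1 / (2 * L) * ‖f' i y - f' i x‖ ^ 2
      - μ / L * ⟪f' i y, x - y⟫ := by
    intro i
    exact key_ineq μ L hμ hμL (f i) (f' i)
      (descent_lemma (f i) (f' i) (hgrad i) L hL.le (hsmooth i))
      (fun a b => hsc i a b) x y
  have hsum : ∑ i, ⟪f' i x, y - x⟫ ≤ ∑ i, ((L - μ) / L * (f i y - f i x)
      - μ / 2 * ‖y - x‖ ^ 2 - 1 / (2 * L) * ‖f' i y - f' i x‖ ^ 2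
      - μ / L * ⟪f' i y, x - y⟫) :=
    Finset.sum_le_sum fun i _ => hkey i
  have hexp : ∑ i, ((L - μ) / L * (f i y - f i x)
      - μ / 2 * ‖y - x‖ ^ 2 - 1 / (2 * L) * ‖f' i y - f' i x‖ ^ 2
      - μ / L * ⟪f' i y, x - y⟫)
      = (L - μ) / L * (∑ i, f i y - ∑ i, f i x) - (n:ℝ) * (μ / 2 * ‖y - x‖ ^ 2)
        - 1 / (2 * L) * ∑ i, ‖f' i y - f' i x‖ ^ 2
        - μ / L * ∑ i, ⟪f' i y, x - y⟫ := by
    simp only [Finset.sum_sub_distrib, ← Finset.mul_sum, mul_sub, Finset.sum_const,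
      Finset.card_univ, Fintype.card_fin, nsmul_eq_mul]
    ring
  rw [hexp] at hsum
  have h2 := mul_le_mul_of_nonneg_left hsum (by positivity : (0:ℝ) ≤ 1 / (n:ℝ))
  rw [real_inner_smul_left, real_inner_smul_left, sum_inner, sum_inner]
  have eqn : 1 / (n:ℝ) * ((L - μ) / L * (∑ i, f i y - ∑ i, f i x)
        - (n:ℝ) * (μ / 2 * ‖y - x‖ ^ 2)
        - 1 / (2 * L) * ∑ i, ‖f' i y - f' i x‖ ^ 2
        - μ / L * ∑ i, ⟪f' i y, x - y⟫)
      = (L - μ) / L * ((1 / (n : ℝ)) * ∑ i, f i y - (1 / (n : ℝ)) * ∑ i, f i x)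
      - μ / 2 * ‖y - x‖ ^ 2
      - (1 / (2 * L * n)) * ∑ i, ‖f' i y - f' i x‖ ^ 2
      - μ / L * ((1 / (n : ℝ)) * ∑ i, ⟪f' i y, x - y⟫) := by
    field_simp
  calc (1 / (n:ℝ)) * ∑ i, ⟪f' i x, y - x⟫ ≤ _ := h2
    _ = _ := eqn
end

section
/- Let f(x) = (1/n)∑_{i=1}^n f_i(x) with each f_i : ℝ^d → ℝ differentiable, and for a point x ∈ ℝ^d, a table φ_1, …, φ_n ∈ ℝ^d and a step size γ > 0 define w^(j) = x − γ[∇f_j(x) − ∇f_j(φ_j) + (1/n)∑_i ∇f_i(φ_i)] for each j. Then for every y ∈ ℝ^d and every β > 0: (1/n)∑_{j=1}^n ‖w^(j) − x + γ∇f(y)‖² ≤ γ²(1 + β⁻¹)(1/n)∑_{j=1}^n ‖∇f_j(φ_j) − ∇f_j(y)‖² + γ²(1 + β)(1/n)∑_{j=1}^n ‖∇f_j(x) − ∇f_j(y)‖² − γ²β‖∇f(x) − ∇f(y)‖². -/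
open scoped RealInnerProductSpace

section aux
variable {E : Type*} [NormedAddCommGroup E] [InnerProductSpace ℝ E]

lemma young_ineq {β : ℝ} (hβ : 0 < β) (u v : E) :
    ‖u + v‖ ^ 2 ≤ (1 + β) * ‖u‖ ^ 2 + (1 + β⁻¹) * ‖v‖ ^ 2 := by
  have h1 : ‖u + v‖ ^ 2 = ‖u‖ ^ 2 + 2 * ⟪u, v⟫ + ‖v‖ ^ 2 := norm_add_sq_real u v
  have h2 : ⟪u, v⟫ ≤ ‖u‖ * ‖v‖ := real_inner_le_norm u v
  have hβ' : (0:ℝ) < β⁻¹ := inv_pos.mpr hβ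
  have hc : β * β⁻¹ = 1 := mul_inv_cancel₀ hβ.ne'
  nlinarith [sq_nonneg (β * ‖u‖ - ‖v‖), mul_nonneg hβ'.le (sq_nonneg (β * ‖u‖ - ‖v‖))]

lemma sum_sq_sub_avg {n : ℕ} (a : Fin n → E) (m : E) (hm : ∑ i, a i = (n:ℝ) • m) :
    ∑ j, ‖a j - m‖ ^ 2 = ∑ j, ‖a j‖ ^ 2 - n * ‖m‖ ^ 2 := by
  have h : ∀ j, ‖a j - m‖ ^ 2 = ‖a j‖ ^ 2 - 2 * ⟪a j, m⟫ + ‖m‖ ^ 2 := fun j =>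
    norm_sub_sq_real (a j) m
  have hs : ∑ j, ⟪a j, m⟫ = (n:ℝ) * ‖m‖ ^ 2 := by
    rw [← sum_inner, hm, real_inner_smul_left, real_inner_self_eq_norm_sq]
  simp only [h]
  rw [Finset.sum_add_distrib, Finset.sum_sub_distrib, ← Finset.mul_sum, hs,
    Finset.sum_const, Finset.card_univ, Fintype.card_fin, nsmul_eq_mul]
  ring

lemma avg_bound {n : ℕ} (hn : 1 ≤ n) {β : ℝ} (hβ : 0 < β) (a b : Fin n → E) :
    ∑ j, ‖a j - b j + (1/(n:ℝ)) • ∑ i, b i‖ ^ 2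
      ≤ (1 + β⁻¹) * ∑ j, ‖b j‖ ^ 2 + (1 + β) * ∑ j, ‖a j‖ ^ 2
        - β * n * ‖(1/(n:ℝ)) • ∑ i, a i‖ ^ 2 := by
  have hn0 : (n:ℝ) ≠ 0 := Nat.cast_ne_zero.mpr (by omega)
  set ab : E := (1/(n:ℝ)) • ∑ i, a i with hab
  set bb : E := (1/(n:ℝ)) • ∑ i, b i with hbb
  have hma : ∑ i, a i = (n:ℝ) • ab := by
    rw [hab, smul_smul]
    field_simp
    rw [one_smul]
  have hmb : ∑ i, b i = (n:ℝ) • bb := by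
    rw [hbb, smul_smul]
    field_simp
    rw [one_smul]
  set p : Fin n → E := fun j => (a j - ab) + (bb - b j) with hp
  have hpsum : ∑ j, p j = 0 := by
    simp only [hp]
    rw [Finset.sum_add_distrib, Finset.sum_sub_distrib, Finset.sum_sub_distrib,
      Finset.sum_const, Finset.card_univ, Fintype.card_fin, hma, hmb]
    simp [Nat.cast_smul_eq_nsmul ℝ]
  have step1 : ∑ j, ‖a j - b j + bb‖ ^ 2
      = ∑ j, ‖p j‖ ^ 2 + (n:ℝ) * ‖ab‖ ^ 2 := by
    have hvec : ∀ j, a j - b j + bb = p j + ab := fun j => by simp only [hp]; abel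
    have hexp : ∀ j, ‖p j + ab‖ ^ 2 = ‖p j‖ ^ 2 + 2 * ⟪p j, ab⟫ + ‖ab‖ ^ 2 := fun j =>
      norm_add_sq_real _ _
    simp only [hvec, hexp]
    rw [Finset.sum_add_distrib, Finset.sum_add_distrib, ← Finset.mul_sum, ← sum_inner,
      hpsum, Finset.sum_const, Finset.card_univ, Fintype.card_fin, nsmul_eq_mul]
    simp [inner_zero_left]
  have step2 : ∑ j, ‖p j‖ ^ 2
      ≤ (1 + β) * ∑ j, ‖a j - ab‖ ^ 2 + (1 + β⁻¹) * ∑ j, ‖bb - b j‖ ^ 2 := by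
    rw [Finset.mul_sum, Finset.mul_sum, ← Finset.sum_add_distrib]
    exact Finset.sum_le_sum fun j _ => young_ineq hβ _ _
  have hA : ∑ j, ‖a j - ab‖ ^ 2 = ∑ j, ‖a j‖ ^ 2 - n * ‖ab‖ ^ 2 := sum_sq_sub_avg a ab hma
  have hB : ∑ j, ‖bb - b j‖ ^ 2 = ∑ j, ‖b j‖ ^ 2 - n * ‖bb‖ ^ 2 := by
    have : ∀ j, ‖bb - b j‖ ^ 2 = ‖b j - bb‖ ^ 2 := fun j => by rw [norm_sub_rev]
    simp only [this]
    exact sum_sq_sub_avg b bb hmb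
  have hbb0 : (0:ℝ) ≤ (n:ℝ) * ‖bb‖ ^ 2 := by positivity
  have hβ' : (0:ℝ) < β⁻¹ := inv_pos.mpr hβ
  nlinarith [step1, step2, hA, hB, mul_nonneg hβ'.le hbb0]

end aux

theorem saga_error_bound (d n : ℕ) (hn : 1 ≤ n) (γ β : ℝ)
    (hγ : 0 < γ) (hβ : 0 < β)
    (f : Fin n → EuclideanSpace ℝ (Fin d) → ℝ)
    (f' : Fin n → EuclideanSpace ℝ (Fin d) → EuclideanSpace ℝ (Fin d))
    (hgrad : ∀ i x, HasGradientAt (f i) (f' i x) x)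
    (x y : EuclideanSpace ℝ (Fin d)) (φ : Fin n → EuclideanSpace ℝ (Fin d)) :
    (1 / (n : ℝ)) * ∑ j,
        ‖(x - γ • (f' j x - f' j (φ j) + (1 / (n : ℝ)) • ∑ i, f' i (φ i))) - x
            + γ • ((1 / (n : ℝ)) • ∑ i, f' i y)‖ ^ 2
      ≤ γ ^ 2 * (1 + β⁻¹) * ((1 / (n : ℝ)) * ∑ j, ‖f' j (φ j) - f' j y‖ ^ 2)
        + γ ^ 2 * (1 + β) * ((1 / (n : ℝ)) * ∑ j, ‖f' j x - f' j y‖ ^ 2)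
        - γ ^ 2 * β * ‖(1 / (n : ℝ)) • ∑ i, f' i x - (1 / (n : ℝ)) • ∑ i, f' i y‖ ^ 2 := by
  have hn0 : (n:ℝ) ≠ 0 := Nat.cast_ne_zero.mpr (by omega)
  set a : Fin n → EuclideanSpace ℝ (Fin d) := fun j => f' j x - f' j y with ha
  set b : Fin n → EuclideanSpace ℝ (Fin d) := fun j => f' j (φ j) - f' j y with hb
  have hsb : ∑ i, b i = ∑ i, f' i (φ i) - ∑ i, f' i y := by
    rw [hb, Finset.sum_sub_distrib]
  have hsa : ∑ i, a i = ∑ i, f' i x - ∑ i, f' i y := by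
    rw [ha, Finset.sum_sub_distrib]
  have hvec : ∀ j, (x - γ • (f' j x - f' j (φ j) + (1 / (n : ℝ)) • ∑ i, f' i (φ i))) - x
      + γ • ((1 / (n : ℝ)) • ∑ i, f' i y)
      = -(γ • (a j - b j + (1/(n:ℝ)) • ∑ i, b i)) := fun j => by
    simp only [ha, hb, hsb, Finset.sum_sub_distrib]
    module
  have hnorm : ∀ j, ‖(x - γ • (f' j x - f' j (φ j) + (1 / (n : ℝ)) • ∑ i, f' i (φ i))) - x
      + γ • ((1 / (n : ℝ)) • ∑ i, f' i y)‖ ^ 2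
      = γ ^ 2 * ‖a j - b j + (1/(n:ℝ)) • ∑ i, b i‖ ^ 2 := fun j => by
    rw [hvec j, norm_neg, norm_smul, Real.norm_eq_abs, abs_of_pos hγ, mul_pow]
  have hlast : (1 / (n : ℝ)) • ∑ i, f' i x - (1 / (n : ℝ)) • ∑ i, f' i y
      = (1/(n:ℝ)) • ∑ i, a i := by
    rw [hsa, smul_sub]
  rw [hlast]
  simp only [hnorm]
  rw [← Finset.mul_sum]
  have key := avg_bound hn hβ a b
  have h1 : (0:ℝ) < 1/(n:ℝ) := by positivity
  have hfrac : (1/(n:ℝ)) * (n:ℝ) = 1 := by field_simp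
  calc (1 / (n:ℝ)) * (γ ^ 2 * ∑ j, ‖a j - b j + (1/(n:ℝ)) • ∑ i, b i‖ ^ 2)
      ≤ (1 / (n:ℝ)) * (γ ^ 2 * ((1 + β⁻¹) * ∑ j, ‖b j‖ ^ 2 + (1 + β) * ∑ j, ‖a j‖ ^ 2
          - β * n * ‖(1/(n:ℝ)) • ∑ i, a i‖ ^ 2)) := by
        apply mul_le_mul_of_nonneg_left _ h1.le
        exact mul_le_mul_of_nonneg_left key (by positivity)
    _ = γ ^ 2 * (1 + β⁻¹) * ((1 / (n : ℝ)) * ∑ j, ‖b j‖ ^ 2)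
        + γ ^ 2 * (1 + β) * ((1 / (n : ℝ)) * ∑ j, ‖a j‖ ^ 2)
        - γ ^ 2 * β * (((1/(n:ℝ)) * (n:ℝ)) * ‖(1/(n:ℝ)) • ∑ i, a i‖ ^ 2) := by ring
    _ = _ := by rw [hfrac]; ring
end

section
/- Under the SAGA setup with γ ≤ 1/L, fix the iterate x and the table φ_1, …, φ_n, and for each index j let Δ_j = −(1/γ)(w^(j) − x) − ∇f(x) and let x^(j) be the proximal point of the SAGA update with index j. Then (1/n)∑_{j=1}^n ‖x^(j) − x*‖² ≤ ‖x − x*‖² − 2γ · (1/n)∑_{j=1}^n [F(x^(j)) − F(x*)] + 2γ² · (1/n)∑_{j=1}^n ‖Δ_j‖². -/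
open scoped RealInnerProductSpace

/-- The SAGA pre-proximal point `w^(j)` for iterate `x`, table `φ` and index `j`. -/
noncomputable def sagaW (d n : ℕ) (γ : ℝ)
    (f' : Fin n → EuclideanSpace ℝ (Fin d) → EuclideanSpace ℝ (Fin d))
    (x : EuclideanSpace ℝ (Fin d)) (φ : Fin n → EuclideanSpace ℝ (Fin d))
    (j : Fin n) : EuclideanSpace ℝ (Fin d) :=
  x - γ • (f' j x - f' j (φ j) + (1 / (n : ℝ)) • ∑ i, f' i (φ i))

section SagaHelpers

open Set

variable {F : Type*} [NormedAddCommGroup F] [InnerProductSpace ℝ F] [CompleteSpace F]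

lemma saga_grad_line (f : F → ℝ) (g : F → F) (hg : ∀ z, HasGradientAt f (g z) z)
    (x v : F) (t : ℝ) :
    HasDerivAt (fun s : ℝ => f (x + s • v)) ⟪g (x + t • v), v⟫ t := by
  have h1 : HasDerivAt (fun s : ℝ => x + s • v) v t := by
    simpa using ((hasDerivAt_id t).smul_const v).const_add x
  have h2 := (hasGradientAt_iff_hasFDerivAt.mp (hg (x + t • v)))
  have h3 := h2.comp_hasDerivAt t h1
  exact h3

lemma saga_convex_foc {f : F → ℝ} {g : F → F} (hg : ∀ z, HasGradientAt f (g z) z)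
    (hc : ConvexOn ℝ Set.univ f) (x y : F) : ⟪g x, y - x⟫ ≤ f y - f x := by
  have hline := saga_grad_line f g hg x (y - x)
  have hconv : ConvexOn ℝ Set.univ (fun s : ℝ => f (x + s • (y - x))) := by
    have h := hc.comp_affineMap (AffineMap.lineMap x y)
    have : ((AffineMap.lineMap x y : ℝ →ᵃ[ℝ] F)) ⁻¹' Set.univ = Set.univ := by simp
    rw [this] at h
    have e : (fun s : ℝ => f (x + s • (y - x))) = f ∘ AffineMap.lineMap x y := by
      funext s; simp [AffineMap.lineMap_apply, add_comm]
    rw [e]; exact h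
  have hslope := hconv.le_slope_of_hasDerivWithinAt (mem_univ (0:ℝ)) (mem_univ (1:ℝ))
    one_pos ((hline 0).hasDerivWithinAt)
  rw [slope_def_field] at hslope
  simpa using hslope

lemma saga_descent {f : F → ℝ} {g : F → F} {L : ℝ} (hg : ∀ z, HasGradientAt f (g z) z)
    (hsm : ∀ a b, ‖g a - g b‖ ≤ L * ‖a - b‖) (x y : F) :
    f y ≤ f x + ⟪g x, y - x⟫ + L / 2 * ‖y - x‖ ^ 2 := by
  set v := y - x with hv
  set q : ℝ → ℝ := fun t => f (x + t • v) - t * ⟪g x, v⟫ - L / 2 * t ^ 2 * ‖v‖ ^ 2 with hq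
  have hq' : ∀ t, HasDerivAt q (⟪g (x + t • v), v⟫ - ⟪g x, v⟫ - L * t * ‖v‖ ^ 2) t := by
    intro t
    have h1 := saga_grad_line f g hg x v t
    have h2 : HasDerivAt (fun s : ℝ => s * ⟪g x, v⟫) ⟪g x, v⟫ t := by
      simpa using (hasDerivAt_id t).mul_const ⟪g x, v⟫
    have h3 : HasDerivAt (fun s : ℝ => L / 2 * s ^ 2 * ‖v‖ ^ 2) (L * t * ‖v‖ ^ 2) t := by
      have h4 := ((hasDerivAt_pow 2 t).const_mul (L / 2)).mul_const (‖v‖ ^ 2)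
      exact h4.congr_deriv (by rw [show (2:ℕ) - 1 = 1 from rfl]; push_cast; ring)
    exact (h1.sub h2).sub h3
  have mono : AntitoneOn q (Set.Icc (0:ℝ) 1) := by
    apply antitoneOn_of_deriv_nonpos (convex_Icc 0 1)
    · exact fun t _ => (hq' t).differentiableAt.continuousAt.continuousWithinAt
    · exact fun t _ => (hq' t).differentiableAt.differentiableWithinAt
    · intro t ht
      rw [interior_Icc] at ht
      rw [(hq' t).deriv]
      have hb : ⟪g (x + t • v) - g x, v⟫ ≤ L * t * ‖v‖ ^ 2 := by
        calc ⟪g (x + t • v) - g x, v⟫ ≤ ‖g (x + t • v) - g x‖ * ‖v‖ :=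
              real_inner_le_norm _ _
          _ ≤ (L * ‖(x + t • v) - x‖) * ‖v‖ :=
              mul_le_mul_of_nonneg_right (hsm _ _) (norm_nonneg _)
          _ = L * (|t| * ‖v‖) * ‖v‖ := by rw [add_sub_cancel_left, norm_smul]; rfl
          _ = L * t * ‖v‖ ^ 2 := by rw [abs_of_pos ht.1]; ring
      have heq : ⟪g (x + t • v), v⟫ - ⟪g x, v⟫ = ⟪g (x + t • v) - g x, v⟫ :=
        (inner_sub_left _ _ _).symm
      linarith
  have h01 : q 1 ≤ q 0 :=
    mono ⟨le_refl 0, zero_le_one⟩ ⟨zero_le_one, le_refl 1⟩ zero_le_one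
  have e1 : q 1 = f y - ⟪g x, v⟫ - L / 2 * ‖v‖ ^ 2 := by
    simp [hq, hv]
  have e0 : q 0 = f x := by simp [hq]
  rw [e1, e0] at h01
  linarith

lemma saga_comb (a b : F) (t : ℝ) :
    ‖a + t • (b - a)‖ ^ 2 = (1 - t) * ‖a‖ ^ 2 + t * ‖b‖ ^ 2 - t * (1 - t) * ‖b - a‖ ^ 2 := by
  rw [norm_add_sq_real, real_inner_smul_right, norm_smul, norm_sub_sq_real,
    inner_sub_right, real_inner_self_eq_norm_sq]
  have hX : ‖b - a‖ ^ 2 = ‖b‖ ^ 2 - 2 * ⟪b, a⟫ + ‖a‖ ^ 2 := norm_sub_sq_real b a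
  have hc : ⟪a, b⟫ = ⟪b, a⟫ := real_inner_comm b a
  rw [Real.norm_eq_abs, mul_pow, sq_abs]
  linear_combination t ^ 2 * hX + 2 * t * hc

lemma saga_prox_strong (h : F → ℝ) (hh : ConvexOn ℝ Set.univ h) (c : ℝ) (hc : 0 < c)
    (w p : F) (hmin : ∀ y, h p + c * ‖p - w‖ ^ 2 ≤ h y + c * ‖y - w‖ ^ 2) (y : F) :
    h p + c * ‖p - w‖ ^ 2 + c * ‖y - p‖ ^ 2 ≤ h y + c * ‖y - w‖ ^ 2 := by
  set Y := ‖y - p‖ ^ 2 with hY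
  have hY0 : 0 ≤ Y := sq_nonneg _
  have key : ∀ t : ℝ, 0 < t → t ≤ 1 →
      h p + c * ‖p - w‖ ^ 2 + c * (1 - t) * Y ≤ h y + c * ‖y - w‖ ^ 2 := by
    intro t ht0 ht1
    set z := p + t • (y - p) with hz
    have hzc : z = (1 - t) • p + t • y := by
      rw [hz]; module
    have h1 : h z ≤ (1 - t) * h p + t * h y := by
      have := hh.2 (mem_univ p) (mem_univ y) (by linarith : (0:ℝ) ≤ 1 - t)
        (le_of_lt ht0) (by ring : (1 - t) + t = 1)
      simpa [hzc, smul_eq_mul] using this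
    have h2 : ‖z - w‖ ^ 2 = (1 - t) * ‖p - w‖ ^ 2 + t * ‖y - w‖ ^ 2 - t * (1 - t) * Y := by
      have hzw : z - w = (p - w) + t • ((y - w) - (p - w)) := by
        rw [hz]; module
      rw [hzw, saga_comb]
      have : (y - w) - (p - w) = y - p := by abel
      rw [this]
    have h3 := hmin z
    have h4 : t * (h p + c * ‖p - w‖ ^ 2 + c * (1 - t) * Y) ≤ t * (h y + c * ‖y - w‖ ^ 2) := by
      nlinarith [h3, h1, h2]
    exact le_of_mul_le_mul_left (by linarith) ht0
  by_contra hcon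
  push_neg at hcon
  set ε := h p + c * ‖p - w‖ ^ 2 + c * Y - (h y + c * ‖y - w‖ ^ 2) with hε
  have hε0 : 0 < ε := by linarith
  set t := min (1/2) (ε / (2 * c * Y + 1)) with htdef
  have hden : 0 < 2 * c * Y + 1 := by nlinarith
  have ht0 : 0 < t := lt_min (by norm_num) (div_pos hε0 hden)
  have ht1 : t ≤ 1 := le_trans (min_le_left _ _) (by norm_num)
  have hk := key t ht0 ht1
  have htle : t ≤ ε / (2 * c * Y + 1) := min_le_right _ _
  have h5 : c * t * Y ≤ c * Y * (ε / (2 * c * Y + 1)) := by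
    have := mul_le_mul_of_nonneg_left htle (by positivity : (0:ℝ) ≤ c * Y)
    linarith [this]
  have h6 : c * Y * (ε / (2 * c * Y + 1)) < ε := by
    have hrw : c * Y * (ε / (2 * c * Y + 1)) = (c * Y / (2 * c * Y + 1)) * ε := by ring
    have hlt : c * Y / (2 * c * Y + 1) < 1 := by
      rw [div_lt_one hden]; nlinarith
    rw [hrw]
    nlinarith [hε0, hlt]
  have : ε ≤ c * t * Y := by nlinarith [hk]
  linarith

lemma saga_firm_pair (c : ℝ) (hc : 0 < c) (h : F → ℝ) (w₁ w₂ p₁ p₂ : F)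
    (H1 : ∀ y, h p₁ + c * ‖p₁ - w₁‖ ^ 2 + c * ‖y - p₁‖ ^ 2 ≤ h y + c * ‖y - w₁‖ ^ 2)
    (H2 : ∀ y, h p₂ + c * ‖p₂ - w₂‖ ^ 2 + c * ‖y - p₂‖ ^ 2 ≤ h y + c * ‖y - w₂‖ ^ 2) :
    0 ≤ ⟪w₁ - w₂, (w₁ - p₁) - (w₂ - p₂)⟫ := by
  have A1 := H1 p₂
  have A2 := H2 p₁
  rw [norm_sub_rev p₂ p₁] at A1
  have H : ‖p₁ - w₁‖ ^ 2 + ‖p₂ - w₂‖ ^ 2 + 2 * ‖p₁ - p₂‖ ^ 2 ≤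
      ‖p₂ - w₁‖ ^ 2 + ‖p₁ - w₂‖ ^ 2 := by
    have hcm : c * (‖p₁ - w₁‖ ^ 2 + ‖p₂ - w₂‖ ^ 2 + 2 * ‖p₁ - p₂‖ ^ 2) ≤
        c * (‖p₂ - w₁‖ ^ 2 + ‖p₁ - w₂‖ ^ 2) := by nlinarith [A1, A2]
    exact le_of_mul_le_mul_left hcm hc
  have Hfirm : ‖p₁ - p₂‖ ^ 2 ≤ ⟪p₁ - p₂, w₁ - w₂⟫ := by
    simp only [norm_sub_sq_real, inner_sub_left, inner_sub_right] at H ⊢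
    have c1 : ⟪p₁, p₂⟫ = ⟪p₂, p₁⟫ := real_inner_comm _ _
    have c2 : ⟪p₁, w₁⟫ = ⟪p₁, w₁⟫ := rfl
    linarith
  have hcs : ⟪p₁ - p₂, w₁ - w₂⟫ ≤ ‖p₁ - p₂‖ * ‖w₁ - w₂‖ := real_inner_le_norm _ _
  have hne : ‖p₁ - p₂‖ ≤ ‖w₁ - w₂‖ := by
    rcases eq_or_lt_of_le (norm_nonneg (p₁ - p₂)) with h0 | h0
    · rw [← h0]; exact norm_nonneg _
    · nlinarith
  have hrw : (w₁ - p₁) - (w₂ - p₂) = (w₁ - w₂) - (p₁ - p₂) := by abel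
  rw [hrw, inner_sub_right, real_inner_self_eq_norm_sq]
  have hc2 : ⟪w₁ - w₂, p₁ - p₂⟫ = ⟪p₁ - p₂, w₁ - w₂⟫ := real_inner_comm _ _
  nlinarith [mul_le_mul_of_nonneg_left hne (norm_nonneg (w₁ - w₂))]

lemma saga_id1 (x a P V : F) (γ : ℝ) :
    ‖a - (x - γ • V)‖ ^ 2 - ‖P - (x - γ • V)‖ ^ 2
      = ‖a - x‖ ^ 2 - ‖P - x‖ ^ 2 + 2 * γ * ⟪V, a - P⟫ := by
  have h1 : a - (x - γ • V) = (a - x) + γ • V := by abel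
  have h2 : P - (x - γ • V) = (P - x) + γ • V := by abel
  rw [h1, h2, norm_add_sq_real, norm_add_sq_real, real_inner_smul_right, real_inner_smul_right]
  have e2 : ⟪V, a - P⟫ = ⟪a - x, V⟫ - ⟪P - x, V⟫ := by
    rw [← inner_sub_left]
    have : (a - x) - (P - x) = a - P := by abel
    rw [this, real_inner_comm]
  linear_combination (-2) * γ * e2

lemma saga_sum_mono {n : ℕ} (hn : 1 ≤ n) (w T : Fin n → F) (u : F)
    (hsum : ∑ j, w j = (n : ℝ) • u)
    (hpair : ∀ j k, 0 ≤ ⟪w j - w k, T j - T k⟫) :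
    0 ≤ ∑ j, ⟪w j - u, T j⟫ := by
  have key : (0:ℝ) ≤ ∑ j, ∑ k, ⟪w j - w k, T j - T k⟫ :=
    Finset.sum_nonneg fun j _ => Finset.sum_nonneg fun k _ => hpair j k
  have expand : ∑ j, ∑ k, ⟪w j - w k, T j - T k⟫
      = 2 * (n : ℝ) * (∑ j, ⟪w j, T j⟫) - 2 * ⟪∑ j, w j, ∑ j, T j⟫ := by
    have e1 : ∀ j k : Fin n, ⟪w j - w k, T j - T k⟫
        = ⟪w j, T j⟫ - ⟪w j, T k⟫ - ⟪w k, T j⟫ + ⟪w k, T k⟫ := by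
      intro j k
      simp [inner_sub_left, inner_sub_right]; ring
    have step : ∀ j : Fin n, ∑ k, (⟪w j, T j⟫ - ⟪w j, T k⟫ - ⟪w k, T j⟫ + ⟪w k, T k⟫)
        = (n : ℝ) * ⟪w j, T j⟫ - ⟪w j, ∑ k, T k⟫ - ⟪∑ k, w k, T j⟫ + ∑ k, ⟪w k, T k⟫ := by
      intro j
      rw [Finset.sum_add_distrib, Finset.sum_sub_distrib, Finset.sum_sub_distrib,
        Finset.sum_const, Finset.card_univ, Fintype.card_fin, nsmul_eq_mul,
        ← inner_sum, ← sum_inner]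
    calc ∑ j, ∑ k, ⟪w j - w k, T j - T k⟫
        = ∑ j, ((n : ℝ) * ⟪w j, T j⟫ - ⟪w j, ∑ k, T k⟫ - ⟪∑ k, w k, T j⟫
            + ∑ k, ⟪w k, T k⟫) := by
          refine Finset.sum_congr rfl fun j _ => ?_
          rw [← step j]
          exact Finset.sum_congr rfl fun k _ => e1 j k
      _ = (n : ℝ) * (∑ j, ⟪w j, T j⟫) - ⟪∑ j, w j, ∑ j, T j⟫ - ⟪∑ j, w j, ∑ j, T j⟫
            + (n : ℝ) * (∑ j, ⟪w j, T j⟫) := by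
          rw [Finset.sum_add_distrib, Finset.sum_sub_distrib, Finset.sum_sub_distrib,
            ← Finset.mul_sum, ← sum_inner, ← inner_sum, Finset.sum_const,
            Finset.card_univ, Fintype.card_fin, nsmul_eq_mul]
      _ = 2 * (n : ℝ) * (∑ j, ⟪w j, T j⟫) - 2 * ⟪∑ j, w j, ∑ j, T j⟫ := by ring
  rw [hsum, real_inner_smul_left] at expand
  have hn0 : (0:ℝ) < (n : ℝ) := by exact_mod_cast hn
  have final : ∑ j, ⟪w j - u, T j⟫ = ∑ j, ⟪w j, T j⟫ - ⟪u, ∑ j, T j⟫ := by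
    simp_rw [inner_sub_left]
    rw [Finset.sum_sub_distrib, ← inner_sum]
  rw [final]
  nlinarith [key, expand]

end SagaHelpers

set_option maxHeartbeats 2000000 in
theorem saga_nonsc_descent_bound (d n : ℕ) (hn : 1 ≤ n) (L γ : ℝ)
    (hL : 0 < L) (hγ : 0 < γ) (hγL : γ ≤ 1 / L)
    (f : Fin n → EuclideanSpace ℝ (Fin d) → ℝ)
    (f' : Fin n → EuclideanSpace ℝ (Fin d) → EuclideanSpace ℝ (Fin d))
    (hgrad : ∀ i x, HasGradientAt (f i) (f' i x) x)
    (hconv : ∀ i, ConvexOn ℝ Set.univ (f i))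
    (hsmooth : ∀ i x y, ‖f' i x - f' i y‖ ≤ L * ‖x - y‖)
    (h : EuclideanSpace ℝ (Fin d) → ℝ) (hh : ConvexOn ℝ Set.univ h)
    (xstar : EuclideanSpace ℝ (Fin d))
    (hstar : ∀ y, (1 / (n : ℝ)) * ∑ i, f i xstar + h xstar
        ≤ (1 / (n : ℝ)) * ∑ i, f i y + h y)
    (x : EuclideanSpace ℝ (Fin d)) (φ : Fin n → EuclideanSpace ℝ (Fin d))
    (xP : Fin n → EuclideanSpace ℝ (Fin d))
    (hP : ∀ j y, h (xP j) + 1 / (2 * γ) * ‖xP j - sagaW d n γ f' x φ j‖ ^ 2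
        ≤ h y + 1 / (2 * γ) * ‖y - sagaW d n γ f' x φ j‖ ^ 2) :
    (1 / (n : ℝ)) * ∑ j, ‖xP j - xstar‖ ^ 2
      ≤ ‖x - xstar‖ ^ 2
        - 2 * γ * ((1 / (n : ℝ)) * ∑ j,
            (((1 / (n : ℝ)) * ∑ i, f i (xP j) + h (xP j))
              - ((1 / (n : ℝ)) * ∑ i, f i xstar + h xstar)))
        + 2 * γ ^ 2 * ((1 / (n : ℝ)) * ∑ j,
            ‖(-(1 / γ)) • (sagaW d n γ f' x φ j - x) - (1 / (n : ℝ)) • ∑ i, f' i x‖ ^ 2) := by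
  classical
  have hN : (0:ℝ) < (n : ℝ) := by exact_mod_cast hn
  have hNe : (n : ℝ) ≠ 0 := ne_of_gt hN
  have hγ0 : γ ≠ 0 := ne_of_gt hγ
  set G : EuclideanSpace ℝ (Fin d) := (1 / (n : ℝ)) • ∑ i, f' i x with hG
  set v : Fin n → EuclideanSpace ℝ (Fin d) :=
    fun j => f' j x - f' j (φ j) + (1 / (n : ℝ)) • ∑ i, f' i (φ i) with hv
  have hw : ∀ j, sagaW d n γ f' x φ j = x - γ • v j := fun j => rfl
  set Δ : Fin n → EuclideanSpace ℝ (Fin d) := fun j => v j - G with hΔ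
  have hΔdef : ∀ j, Δ j = v j - G := fun j => rfl
  set T : Fin n → EuclideanSpace ℝ (Fin d) :=
    fun j => sagaW d n γ f' x φ j - xP j with hT
  have hTdef : ∀ j, T j = sagaW d n γ f' x φ j - xP j := fun j => rfl
  set u : EuclideanSpace ℝ (Fin d) := x - γ • G with hu
  -- rewrite the Δ-expression in the goal
  have hΔeq : ∀ j, (-(1 / γ)) • (sagaW d n γ f' x φ j - x) - G = Δ j := by
    intro j
    rw [hw j, hΔdef j]
    have h1 : x - γ • v j - x = -(γ • v j) := by abel
    rw [h1, smul_neg, neg_smul, neg_neg, smul_smul]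
    have h2 : 1 / γ * γ = 1 := by field_simp
    rw [h2, one_smul]
  simp only [hΔeq]
  -- basic smul fact
  have hNsmul : ∀ z : EuclideanSpace ℝ (Fin d), (n : ℝ) • ((1 / (n : ℝ)) • z) = z := by
    intro z
    rw [smul_smul, mul_one_div, div_self hNe, one_smul]
  have hsumv : ∑ j, v j = (n : ℝ) • G := by
    rw [hG, hNsmul]
    simp only [hv]
    rw [Finset.sum_add_distrib, Finset.sum_sub_distrib, Finset.sum_const, Finset.card_univ,
      Fintype.card_fin, ← Nat.cast_smul_eq_nsmul ℝ, hNsmul]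
    abel
  have hΔ0 : ∑ j, Δ j = 0 := by
    simp only [hΔdef]
    rw [Finset.sum_sub_distrib, hsumv, Finset.sum_const, Finset.card_univ, Fintype.card_fin,
      ← Nat.cast_smul_eq_nsmul ℝ, sub_self]
  have hsumw : ∑ j, sagaW d n γ f' x φ j = (n : ℝ) • u := by
    simp only [hw]
    rw [Finset.sum_sub_distrib, Finset.sum_const, Finset.card_univ, Fintype.card_fin,
      ← Nat.cast_smul_eq_nsmul ℝ, ← Finset.smul_sum, hsumv, hu, smul_sub, smul_comm]
  -- prox properties
  have hc : (0:ℝ) < 1 / (2 * γ) := by positivity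
  have refined : ∀ j y, h (xP j) + 1 / (2 * γ) * ‖xP j - sagaW d n γ f' x φ j‖ ^ 2
      + 1 / (2 * γ) * ‖y - xP j‖ ^ 2
      ≤ h y + 1 / (2 * γ) * ‖y - sagaW d n γ f' x φ j‖ ^ 2 :=
    fun j => saga_prox_strong h hh (1 / (2 * γ)) hc _ _ (hP j)
  have hpairfirm : ∀ j k,
      0 ≤ ⟪sagaW d n γ f' x φ j - sagaW d n γ f' x φ k, T j - T k⟫ := by
    intro j k
    have := saga_firm_pair (1 / (2 * γ)) hc h (sagaW d n γ f' x φ j) (sagaW d n γ f' x φ k)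
      (xP j) (xP k) (refined j) (refined k)
    simpa [hTdef] using this
  have hTsum : 0 ≤ ∑ j, ⟪sagaW d n γ f' x φ j - u, T j⟫ :=
    saga_sum_mono hn (fun j => sagaW d n γ f' x φ j) T u hsumw hpairfirm
  have hΔT : ∑ j, ⟪Δ j, T j⟫ ≤ 0 := by
    have hwu : ∀ j, sagaW d n γ f' x φ j - u = (-γ) • Δ j := by
      intro j
      rw [hw j, hu, hΔdef j]
      module
    have heq : ∀ j, ⟪sagaW d n γ f' x φ j - u, T j⟫ = -γ * ⟪Δ j, T j⟫ := by
      intro j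
      rw [hwu j, real_inner_smul_left]
    simp_rw [heq] at hTsum
    rw [← Finset.mul_sum] at hTsum
    nlinarith [hTsum, hγ]
  -- averaged convexity and descent
  have k3 : ⟪G, xstar - x⟫ ≤ (1 / (n : ℝ)) * ∑ i, f i xstar - (1 / (n : ℝ)) * ∑ i, f i x := by
    have per : ∀ i : Fin n, ⟪f' i x, xstar - x⟫ ≤ f i xstar - f i x := fun i =>
      saga_convex_foc (hgrad i) (hconv i) x xstar
    have hsum := Finset.sum_le_sum (fun i (_ : i ∈ Finset.univ) => per i)
    rw [Finset.sum_sub_distrib] at hsum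
    have hGi : ⟪G, xstar - x⟫ = (1 / (n : ℝ)) * ∑ i, ⟪f' i x, xstar - x⟫ := by
      rw [hG, real_inner_smul_left, sum_inner]
    rw [hGi]
    have h2 := mul_le_mul_of_nonneg_left hsum (le_of_lt (by positivity : (0:ℝ) < 1 / (n : ℝ)))
    calc (1 / (n : ℝ)) * ∑ i, ⟪f' i x, xstar - x⟫
        ≤ (1 / (n : ℝ)) * (∑ i, f i xstar - ∑ i, f i x) := h2
      _ = (1 / (n : ℝ)) * ∑ i, f i xstar - (1 / (n : ℝ)) * ∑ i, f i x := by ring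
  have k4 : ∀ P : EuclideanSpace ℝ (Fin d), (1 / (n : ℝ)) * ∑ i, f i P
      ≤ (1 / (n : ℝ)) * ∑ i, f i x + ⟪G, P - x⟫ + L / 2 * ‖P - x‖ ^ 2 := by
    intro P
    have per : ∀ i : Fin n, f i P ≤ f i x + ⟪f' i x, P - x⟫ + L / 2 * ‖P - x‖ ^ 2 := fun i =>
      saga_descent (hgrad i) (fun a b => hsmooth i a b) x P
    have hs := Finset.sum_le_sum (fun i (_ : i ∈ Finset.univ) => per i)
    rw [Finset.sum_add_distrib, Finset.sum_add_distrib, Finset.sum_const, Finset.card_univ,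
      Fintype.card_fin, nsmul_eq_mul] at hs
    have hGi : ⟪G, P - x⟫ = (1 / (n : ℝ)) * ∑ i, ⟪f' i x, P - x⟫ := by
      rw [hG, real_inner_smul_left, sum_inner]
    have h2 := mul_le_mul_of_nonneg_left hs (le_of_lt (by positivity : (0:ℝ) < 1 / (n : ℝ)))
    calc (1 / (n : ℝ)) * ∑ i, f i P
        ≤ (1 / (n : ℝ)) * (∑ i, f i x + ∑ i, ⟪f' i x, P - x⟫ + (n : ℝ) * (L / 2 * ‖P - x‖ ^ 2)) :=
          h2
      _ = (1 / (n : ℝ)) * ∑ i, f i x + (1 / (n : ℝ)) * ∑ i, ⟪f' i x, P - x⟫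
            + L / 2 * ‖P - x‖ ^ 2 := by field_simp
      _ = (1 / (n : ℝ)) * ∑ i, f i x + ⟪G, P - x⟫ + L / 2 * ‖P - x‖ ^ 2 := by rw [hGi]
  have k6 : γ * L ≤ 1 := by
    rw [le_div_iff₀ hL] at hγL
    exact hγL
  -- per-index inequality
  have mainj : ∀ j, ‖xP j - xstar‖ ^ 2 ≤ ‖x - xstar‖ ^ 2
      - 2 * γ * (((1 / (n : ℝ)) * ∑ i, f i (xP j) + h (xP j))
        - ((1 / (n : ℝ)) * ∑ i, f i xstar + h xstar))
      + 2 * γ ^ 2 * ‖Δ j‖ ^ 2 + 2 * γ * ⟪Δ j, xstar - x⟫ + 2 * γ ^ 2 * ⟪Δ j, G⟫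
      + 2 * γ * ⟪Δ j, T j⟫ := by
    intro j
    have E1 : ‖xstar - xP j‖ ^ 2 + ‖xP j - sagaW d n γ f' x φ j‖ ^ 2 + 2 * γ * h (xP j)
        ≤ 2 * γ * h xstar + ‖xstar - sagaW d n γ f' x φ j‖ ^ 2 := by
      have hra := refined j xstar
      have hm := mul_le_mul_of_nonneg_left hra (by linarith : (0:ℝ) ≤ 2 * γ)
      have hcc : ∀ z : ℝ, 2 * γ * (1 / (2 * γ) * z) = z := by
        intro z; field_simp
      rw [mul_add, mul_add, mul_add, hcc, hcc, hcc] at hm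
      linarith [hm]
    have E2 : ‖xstar - sagaW d n γ f' x φ j‖ ^ 2 - ‖xP j - sagaW d n γ f' x φ j‖ ^ 2
        = ‖xstar - x‖ ^ 2 - ‖xP j - x‖ ^ 2 + 2 * γ * ⟪v j, xstar - xP j⟫ := by
      rw [hw j]
      exact saga_id1 x xstar (xP j) (v j) γ
    have I5 : ⟪v j, xstar - xP j⟫ = ⟪G, xstar - x⟫ + ⟪G, x - sagaW d n γ f' x φ j⟫
        + ⟪G, sagaW d n γ f' x φ j - xP j⟫ + ⟪Δ j, xstar - x⟫
        + ⟪Δ j, x - sagaW d n γ f' x φ j⟫ + ⟪Δ j, sagaW d n γ f' x φ j - xP j⟫ := by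
      rw [show xstar - xP j = (xstar - x) + ((x - sagaW d n γ f' x φ j)
        + (sagaW d n γ f' x φ j - xP j)) from by abel]
      rw [show v j = G + Δ j from by rw [hΔdef j]; abel]
      simp only [inner_add_left, inner_add_right]
      ring
    have I8 : ⟪G, x - sagaW d n γ f' x φ j⟫ + ⟪G, sagaW d n γ f' x φ j - xP j⟫
        = ⟪G, x - xP j⟫ := by
      rw [← inner_add_right]
      rw [show (x - sagaW d n γ f' x φ j) + (sagaW d n γ f' x φ j - xP j) = x - xP j from by abel]
    have I9 : ⟪Δ j, x - sagaW d n γ f' x φ j⟫ = γ * ⟪Δ j, G⟫ + γ * ‖Δ j‖ ^ 2 := by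
      rw [show x - sagaW d n γ f' x φ j = γ • v j from by rw [hw j]; abel]
      rw [real_inner_smul_right, show v j = G + Δ j from by rw [hΔdef j]; abel,
        inner_add_right, real_inner_self_eq_norm_sq]
      ring
    have I7 : ⟪G, x - xP j⟫ = -⟪G, xP j - x⟫ := by
      rw [show x - xP j = -(xP j - x) from by abel, inner_neg_right]
    have ITj : ⟪Δ j, sagaW d n γ f' x φ j - xP j⟫ = ⟪Δ j, T j⟫ := by rw [hTdef j]
    have I5' := congrArg (fun z => 2 * γ * z) I5
    have I8' := congrArg (fun z => 2 * γ * z) I8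
    have I9' := congrArg (fun z => 2 * γ * z) I9
    have I7' := congrArg (fun z => 2 * γ * z) I7
    have ITj' := congrArg (fun z => 2 * γ * z) ITj
    have E3 := mul_le_mul_of_nonneg_left k3 (by linarith : (0:ℝ) ≤ 2 * γ)
    have E4 := mul_le_mul_of_nonneg_left (k4 (xP j)) (by linarith : (0:ℝ) ≤ 2 * γ)
    have E6 : γ * L * ‖xP j - x‖ ^ 2 ≤ ‖xP j - x‖ ^ 2 := by
      nlinarith [k6, sq_nonneg ‖xP j - x‖]
    have hn1 : ‖xP j - xstar‖ ^ 2 = ‖xstar - xP j‖ ^ 2 := by rw [norm_sub_rev]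
    have hn2 : ‖x - xstar‖ ^ 2 = ‖xstar - x‖ ^ 2 := by rw [norm_sub_rev]
    rw [hn1, hn2]
    linarith [E1, E2, E3, E4, E6, I5', I8', I9', I7', ITj']
  -- sum up
  have hsum_main : ∑ j, ‖xP j - xstar‖ ^ 2
      ≤ (n : ℝ) * ‖x - xstar‖ ^ 2
        - 2 * γ * (∑ j, (((1 / (n : ℝ)) * ∑ i, f i (xP j) + h (xP j))
            - ((1 / (n : ℝ)) * ∑ i, f i xstar + h xstar)))
        + 2 * γ ^ 2 * (∑ j, ‖Δ j‖ ^ 2) := by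
    have hb := Finset.sum_le_sum (fun j (_ : j ∈ Finset.univ) => mainj j)
    have hsplit : ∑ j, (‖x - xstar‖ ^ 2
          - 2 * γ * (((1 / (n : ℝ)) * ∑ i, f i (xP j) + h (xP j))
            - ((1 / (n : ℝ)) * ∑ i, f i xstar + h xstar))
          + 2 * γ ^ 2 * ‖Δ j‖ ^ 2 + 2 * γ * ⟪Δ j, xstar - x⟫ + 2 * γ ^ 2 * ⟪Δ j, G⟫
          + 2 * γ * ⟪Δ j, T j⟫)
        = (n : ℝ) * ‖x - xstar‖ ^ 2
          - 2 * γ * (∑ j, (((1 / (n : ℝ)) * ∑ i, f i (xP j) + h (xP j))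
              - ((1 / (n : ℝ)) * ∑ i, f i xstar + h xstar)))
          + 2 * γ ^ 2 * (∑ j, ‖Δ j‖ ^ 2) + 2 * γ * ⟪∑ j, Δ j, xstar - x⟫
          + 2 * γ ^ 2 * ⟪∑ j, Δ j, G⟫ + 2 * γ * (∑ j, ⟪Δ j, T j⟫) := by
      rw [Finset.sum_add_distrib, Finset.sum_add_distrib, Finset.sum_add_distrib,
        Finset.sum_add_distrib, Finset.sum_sub_distrib, Finset.sum_const, Finset.card_univ,
        Fintype.card_fin, nsmul_eq_mul, ← Finset.mul_sum, ← Finset.mul_sum, ← Finset.mul_sum,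
        ← Finset.mul_sum, ← Finset.mul_sum, ← sum_inner, ← sum_inner]
    rw [hsplit, hΔ0, inner_zero_left, inner_zero_left] at hb
    have h2 : 2 * γ * (∑ j, ⟪Δ j, T j⟫) ≤ 0 :=
      mul_nonpos_of_nonneg_of_nonpos (by linarith) hΔT
    simp only [mul_zero, add_zero] at hb
    linarith [hb, h2]
  have hfin := mul_le_mul_of_nonneg_left hsum_main (le_of_lt (by positivity : (0:ℝ) < 1 / (n : ℝ)))
  calc (1 / (n : ℝ)) * ∑ j, ‖xP j - xstar‖ ^ 2
      ≤ (1 / (n : ℝ)) * ((n : ℝ) * ‖x - xstar‖ ^ 2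
        - 2 * γ * (∑ j, (((1 / (n : ℝ)) * ∑ i, f i (xP j) + h (xP j))
            - ((1 / (n : ℝ)) * ∑ i, f i xstar + h xstar)))
        + 2 * γ ^ 2 * (∑ j, ‖Δ j‖ ^ 2)) := hfin
    _ = ‖x - xstar‖ ^ 2
        - 2 * γ * ((1 / (n : ℝ)) * ∑ j, (((1 / (n : ℝ)) * ∑ i, f i (xP j) + h (xP j))
            - ((1 / (n : ℝ)) * ∑ i, f i xstar + h xstar)))
        + 2 * γ ^ 2 * ((1 / (n : ℝ)) * ∑ j, ‖Δ j‖ ^ 2) := by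
      field_simp
end

section
/- Under the SAGA setup with each f_i additionally μ-strongly convex (0 < μ ≤ L), initialize φ_i^0 = x^0 for all i and run k SAGA update steps, choosing the index at each step independently and uniformly at random (so E below is the average over all n^k index sequences). For step size γ = 1/(2(μn + L)): E‖x^k − x*‖² ≤ (1 − μ/(2(μn + L)))^k [‖x^0 − x*‖² + (n/(μn + L))(f(x^0) − ⟨∇f(x*), x^0 − x*⟩ − f(x*))]. For step size γ = 1/(3L): E‖x^k − x*‖² ≤ (1 − min{1/(4n), μ/(3L)})^k [‖x^0 − x*‖² + (2n/(3L))(f(x^0) − ⟨∇f(x*), x^0 − x*⟩ − f(x*))]. -/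
open scoped RealInnerProductSpace

/-- The SAGA state (iterate, table) after `k` update steps with index sequence `js`,
where `prox` is the proximal operator of `h` with weight `1/γ`. -/
noncomputable def sagaIter (d n : ℕ) (γ : ℝ)
    (f' : Fin n → EuclideanSpace ℝ (Fin d) → EuclideanSpace ℝ (Fin d))
    (prox : EuclideanSpace ℝ (Fin d) → EuclideanSpace ℝ (Fin d))
    (x0 : EuclideanSpace ℝ (Fin d)) (js : ℕ → Fin n) :
    ℕ → EuclideanSpace ℝ (Fin d) × (Fin n → EuclideanSpace ℝ (Fin d))
  | 0 => (x0, fun _ => x0)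
  | k + 1 =>
      (prox (sagaW d n γ f' (sagaIter d n γ f' prox x0 js k).1
          (sagaIter d n γ f' prox x0 js k).2 (js k)),
       Function.update (sagaIter d n γ f' prox x0 js k).2 (js k)
          (sagaIter d n γ f' prox x0 js k).1)

/-- Extends a finite index sequence to an infinite one (the tail is irrelevant). -/
def extSeq {n : ℕ} (hn : 0 < n) {k : ℕ} (js : Fin k → Fin n) : ℕ → Fin n :=
  fun t => if h : t < k then js ⟨t, h⟩ else ⟨0, hn⟩

section AuxAnalysis
variable {E : Type*} [NormedAddCommGroup E] [InnerProductSpace ℝ E]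

section Complete
variable [CompleteSpace E]



lemma smooth_descent {φ : E → ℝ} {φ' : E → E} {M : ℝ} (hM : 0 ≤ M)
    (hgrad : ∀ x, HasGradientAt φ (φ' x) x)
    (hlip : ∀ x y, ‖φ' x - φ' y‖ ≤ M * ‖x - y‖) (x y : E) :
    φ y ≤ φ x + ⟪φ' x, y - x⟫ + M / 2 * ‖y - x‖ ^ 2 := by
  set v := y - x with hv
  have hc : ∀ t : ℝ, HasDerivAt (fun t : ℝ => x + t • v) v t := fun t => by
    simpa using ((hasDerivAt_id t).smul_const v).const_add x
  have hg : ∀ t : ℝ, HasDerivAt (fun t : ℝ => φ (x + t • v)) ⟪φ' (x + t • v), v⟫ t := by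
    intro t
    have h1 := (hgrad (x + t • v)).hasFDerivAt.comp_hasDerivAt t (hc t)
    exact h1.congr_deriv (by simp)
  have hφ' : Continuous φ' := by
    rcases eq_or_lt_of_le hM with hM0 | hM0
    · have : ∀ a b : E, φ' a = φ' b := by
        intro a b
        have := hlip a b
        rw [← hM0] at this
        simpa [norm_le_zero_iff, sub_eq_zero] using this
      exact continuous_const.congr fun a => this x a
    · have : LipschitzWith (Real.toNNReal M) φ' := by
        apply LipschitzWith.of_dist_le_mul
        intro a b
        rw [dist_eq_norm, dist_eq_norm, Real.coe_toNNReal M hM]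
        exact hlip a b
      exact this.continuous
  have hcont : Continuous fun t : ℝ => ⟪φ' (x + t • v), v⟫ := by
    exact (hφ'.comp (by continuity)).inner continuous_const
  have hInt : IntervalIntegrable (fun t => ⟪φ' (x + t • v), v⟫) MeasureTheory.volume 0 1 :=
    hcont.intervalIntegrable 0 1
  have heq : φ (x + (1:ℝ) • v) - φ (x + (0:ℝ) • v)
      = ∫ t in (0:ℝ)..1, ⟪φ' (x + t • v), v⟫ :=
    (intervalIntegral.integral_eq_sub_of_hasDerivAt (fun t _ => hg t) hInt).symm
  have hbound : (∫ t in (0:ℝ)..1, ⟪φ' (x + t • v), v⟫)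
      ≤ ∫ t in (0:ℝ)..1, (⟪φ' x, v⟫ + M * ‖v‖ ^ 2 * t) := by
    apply intervalIntegral.integral_mono_on (by norm_num) hInt
    · exact (continuous_const.add (continuous_const.mul continuous_id)).intervalIntegrable 0 1
    · intro t ht
      have h1 : ⟪φ' (x + t • v), v⟫ - ⟪φ' x, v⟫ = ⟪φ' (x + t • v) - φ' x, v⟫ := by
        rw [inner_sub_left]
      have h2 : ⟪φ' (x + t • v) - φ' x, v⟫ ≤ ‖φ' (x + t • v) - φ' x‖ * ‖v‖ :=
        real_inner_le_norm _ _
      have h3 : ‖φ' (x + t • v) - φ' x‖ ≤ M * (t * ‖v‖) := by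
        have := hlip (x + t • v) x
        simpa [norm_smul, abs_of_nonneg ht.1] using this
      have h4 : ‖φ' (x + t • v) - φ' x‖ * ‖v‖ ≤ M * (t * ‖v‖) * ‖v‖ :=
        mul_le_mul_of_nonneg_right h3 (norm_nonneg v)
      nlinarith [norm_nonneg v]
  have hval : (∫ t in (0:ℝ)..1, (⟪φ' x, v⟫ + M * ‖v‖ ^ 2 * t))
      = ⟪φ' x, v⟫ + M * ‖v‖ ^ 2 / 2 := by
    rw [intervalIntegral.integral_add (intervalIntegrable_const)
      ((intervalIntegral.intervalIntegrable_id).const_mul _),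
      intervalIntegral.integral_const, intervalIntegral.integral_const_mul, integral_id]
    norm_num
    ring
  have hfinal : φ (x + (1:ℝ) • v) - φ (x + (0:ℝ) • v) ≤ ⟪φ' x, v⟫ + M * ‖v‖ ^ 2 / 2 := by
    rw [heq, ← hval]; exact hbound
  have h0 : x + (0:ℝ) • v = x := by simp
  have h1 : x + (1:ℝ) • v = y := by simp [hv]
  rw [h0, h1] at hfinal
  linarith

end Complete




lemma coco_aux {φ : E → ℝ} {φ' : E → E} {M : ℝ} (hM : 0 < M)
    (hlow : ∀ a b : E, φ b + ⟪φ' b, a - b⟫ ≤ φ a)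
    (hup : ∀ a b : E, φ a ≤ φ b + ⟪φ' b, a - b⟫ + M / 2 * ‖a - b‖ ^ 2)
    (a b : E) : ‖φ' a - φ' b‖ ^ 2 ≤ 2 * M * (φ a - φ b - ⟪φ' b, a - b⟫) := by
  set Δ := φ' a - φ' b with hΔ
  set z := a - (1 / M) • Δ with hz
  have h1 := hlow z b
  have h2 := hup z a
  have hza : z - a = -((1/M) • Δ) := by rw [hz]; abel
  have e1 : ⟪φ' b, z - b⟫ = ⟪φ' b, a - b⟫ - (1/M) * ⟪φ' b, Δ⟫ := by
    have hzb : z - b = (a - b) - (1/M) • Δ := by rw [hz]; abel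
    rw [hzb, inner_sub_right, real_inner_smul_right]
  have e2 : ⟪φ' a, z - a⟫ = -((1/M) * ⟪φ' a, Δ⟫) := by
    rw [hza, inner_neg_right, real_inner_smul_right]
  have e3 : ‖z - a‖ ^ 2 = (1/M)^2 * ‖Δ‖ ^ 2 := by
    rw [hza, norm_neg, norm_smul]
    simp [mul_pow, abs_of_pos (by positivity : (0:ℝ) < 1/M)]
  have e4 : ⟪φ' a, Δ⟫ - ⟪φ' b, Δ⟫ = ‖Δ‖ ^ 2 := by
    rw [← inner_sub_left, ← hΔ, real_inner_self_eq_norm_sq]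
  rw [e1] at h1
  rw [e2, e3] at h2
  have key : φ b + ⟪φ' b, a - b⟫ - (1/M) * ⟪φ' b, Δ⟫ ≤
      φ a - (1/M) * ⟪φ' a, Δ⟫ + M / 2 * ((1/M)^2 * ‖Δ‖^2) := by linarith
  have expand : M / 2 * ((1/M)^2 * ‖Δ‖^2) = (1/(2*M)) * ‖Δ‖^2 := by
    field_simp
  rw [expand] at key
  have split : (1/M) * ⟪φ' a, Δ⟫ - (1/M) * ⟪φ' b, Δ⟫ = (1/M) * ‖Δ‖^2 := by
    rw [← mul_sub, e4]
  have final : (1/M) * ‖Δ‖^2 - (1/(2*M)) * ‖Δ‖^2 ≤ φ a - φ b - ⟪φ' b, a - b⟫ := by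
    linarith
  have id2 : (1/M) * ‖Δ‖^2 - (1/(2*M)) * ‖Δ‖^2 = ‖Δ‖^2 / (2*M) := by
    field_simp; ring
  rw [id2, div_le_iff₀ (by positivity)] at final
  linarith

lemma prox_contract {h : E → ℝ} (hh : ConvexOn ℝ Set.univ h) {γ : ℝ} (hγ : 0 < γ)
    {p₁ p₂ w₁ w₂ : E}
    (h₁ : ∀ y, h p₁ + 1 / (2 * γ) * ‖p₁ - w₁‖ ^ 2 ≤ h y + 1 / (2 * γ) * ‖y - w₁‖ ^ 2)
    (h₂ : ∀ y, h p₂ + 1 / (2 * γ) * ‖p₂ - w₂‖ ^ 2 ≤ h y + 1 / (2 * γ) * ‖y - w₂‖ ^ 2) :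
    ‖p₁ - p₂‖ ^ 2 ≤ ‖w₁ - w₂‖ ^ 2 := by
  have key : ∀ t : ℝ, 0 < t → t < 1 →
      (1 - t) * ‖p₁ - p₂‖ ^ 2 ≤ ⟪w₁ - w₂, p₁ - p₂⟫ := by
    intro t ht0 ht1
    have half : ∀ (p q w : E), (∀ y, h p + 1 / (2 * γ) * ‖p - w‖ ^ 2
          ≤ h y + 1 / (2 * γ) * ‖y - w‖ ^ 2) →
        2 * γ * (h p - h q) ≤ 2 * ⟪p - w, q - p⟫ + t * ‖q - p‖ ^ 2 := by
      intro p q w hp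
      have hy := hp (p + t • (q - p))
      have hconv : h (p + t • (q - p)) ≤ (1 - t) * h p + t * h q := by
        have hcv := hh.2 (Set.mem_univ p) (Set.mem_univ q) (by linarith : (0:ℝ) ≤ 1 - t)
          (le_of_lt ht0) (by ring)
        have : (1 - t) • p + t • q = p + t • (q - p) := by
          rw [sub_smul, one_smul, smul_sub]; abel
        rw [this] at hcv
        simpa using hcv
      have hnorm : ‖p + t • (q - p) - w‖ ^ 2
          = ‖p - w‖ ^ 2 + 2 * (t * ⟪p - w, q - p⟫) + t^2 * ‖q - p‖ ^ 2 := by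
        have hre : p + t • (q - p) - w = (p - w) + t • (q - p) := by abel
        rw [hre, norm_add_sq_real, real_inner_smul_right, norm_smul]
        simp [mul_pow, sq_abs]
      rw [hnorm] at hy
      have step0 : t * (h p - h q) ≤ 1 / (2*γ) * (2 * (t * ⟪p - w, q - p⟫)
          + t^2 * ‖q - p‖ ^ 2) := by linarith
      have step1 : (2*γ) * (t * (h p - h q)) ≤ (2*γ) * (1 / (2*γ) * (2 * (t * ⟪p - w, q - p⟫)
          + t^2 * ‖q - p‖ ^ 2)) := mul_le_mul_of_nonneg_left step0 (by positivity)
      have step2 : (2*γ) * (1 / (2*γ) * (2 * (t * ⟪p - w, q - p⟫)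
          + t^2 * ‖q - p‖ ^ 2)) = t * (2 * ⟪p - w, q - p⟫ + t * ‖q - p‖ ^ 2) := by
        field_simp
      rw [step2] at step1
      have step3 : t * (2 * γ * (h p - h q)) ≤ t * (2 * ⟪p - w, q - p⟫ + t * ‖q - p‖ ^ 2) := by
        calc t * (2 * γ * (h p - h q)) = (2*γ) * (t * (h p - h q)) := by ring
          _ ≤ _ := step1
      exact le_of_mul_le_mul_left step3 ht0
    have k1 := half p₁ p₂ w₁ h₁
    have k2 := half p₂ p₁ w₂ h₂
    have e1 : ⟪p₁ - w₁, p₂ - p₁⟫ + ⟪p₂ - w₂, p₁ - p₂⟫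
        = ⟪w₁ - w₂, p₁ - p₂⟫ - ‖p₁ - p₂‖ ^ 2 := by
      have r1 : ⟪p₁ - w₁, p₂ - p₁⟫ = -⟪p₁ - w₁, p₁ - p₂⟫ := by
        rw [show (p₂ : E) - p₁ = -(p₁ - p₂) from by abel, inner_neg_right]
      have r2 : ⟪p₂ - w₂, p₁ - p₂⟫ - ⟪p₁ - w₁, p₁ - p₂⟫
          = ⟪(w₁ - w₂) - (p₁ - p₂), p₁ - p₂⟫ := by
        rw [← inner_sub_left]
        congr 1
        abel
      have r3 : (⟪(w₁ - w₂) - (p₁ - p₂), p₁ - p₂⟫ : ℝ)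
          = ⟪w₁ - w₂, p₁ - p₂⟫ - ‖p₁ - p₂‖ ^ 2 := by
        rw [inner_sub_left, real_inner_self_eq_norm_sq]
      rw [r3] at r2
      linarith
    have hs : ‖p₂ - p₁‖ = ‖p₁ - p₂‖ := norm_sub_rev _ _
    rw [hs] at k1
    rw [← hs] at k2
    rw [hs] at k2
    linarith
  have firm : ‖p₁ - p₂‖ ^ 2 ≤ ⟪w₁ - w₂, p₁ - p₂⟫ := by
    by_contra hcon
    push_neg at hcon
    set A := ‖p₁ - p₂‖ ^ 2 with hA
    set B := ⟪w₁ - w₂, p₁ - p₂⟫ with hB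
    have hA0 : 0 ≤ A := sq_nonneg _
    rcases eq_or_lt_of_le hA0 with h0 | hApos
    · have hk := key (1/2) (by norm_num) (by norm_num)
      rw [← h0] at hk hcon
      simp at hk
      linarith
    · have hAB : 0 < A - B := by linarith
      set t := min ((A - B) / (2*A)) (1/2) with htdef
      have ht0 : 0 < t := lt_min (by positivity) (by norm_num)
      have ht1 : t < 1 := lt_of_le_of_lt (min_le_right _ _) (by norm_num)
      have hk := key t ht0 ht1
      have htA : t * A ≤ (A - B)/2 := by
        have hmin := min_le_left ((A - B) / (2*A)) (1/2)
        have hmul := mul_le_mul_of_nonneg_right hmin (le_of_lt hApos)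
        calc t * A ≤ (A - B)/(2*A) * A := hmul
          _ = (A - B)/2 := by field_simp
      linarith
  nlinarith [real_inner_le_norm (w₁ - w₂) (p₁ - p₂), norm_nonneg (p₁ - p₂),
    norm_nonneg (w₁ - w₂), sq_nonneg (‖p₁ - p₂‖ - ‖w₁ - w₂‖)]



lemma norm_sub_sq_real' (a b : E) : ‖a - b‖^2 = ‖a‖^2 - ‖b‖^2 - 2*⟪b, a - b⟫ := by
  rw [norm_sub_sq_real, inner_sub_right, real_inner_self_eq_norm_sq, real_inner_comm b a]
  ring

lemma young_ineq_s12 {β : ℝ} (hβ : 0 < β) (A B : E) :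
    ‖A - B‖^2 ≤ (1+β)*‖A‖^2 + (1+1/β)*‖B‖^2 := by
  have h0 : (0:ℝ) ≤ ‖β • A + B‖^2 := sq_nonneg _
  rw [norm_add_sq_real, real_inner_smul_left, norm_smul] at h0
  rw [norm_sub_sq_real]
  simp only [Real.norm_eq_abs, mul_pow, sq_abs] at h0
  have hβ' : β ≠ 0 := ne_of_gt hβ
  have h1 : (0:ℝ) ≤ (1/β) * (β^2*‖A‖^2 + 2*(β*⟪A, B⟫) + ‖B‖^2) :=
    mul_nonneg (by positivity) h0
  have h2 : (1/β) * (β^2*‖A‖^2 + 2*(β*⟪A, B⟫) + ‖B‖^2)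
      = β*‖A‖^2 + 2*⟪A, B⟫ + (1/β)*‖B‖^2 := by
    field_simp
  rw [h2] at h1
  linarith

lemma key_ineq_s12 {φ : E → ℝ} {φ' : E → E} {μ M : ℝ} (hμ : 0 < μ) (hM : μ < M)
    (hsc : ∀ a b : E, φ b + ⟪φ' b, a - b⟫ + μ/2 * ‖a - b‖^2 ≤ φ a)
    (hup : ∀ a b : E, φ a ≤ φ b + ⟪φ' b, a - b⟫ + M / 2 * ‖a - b‖ ^ 2)
    (x z : E) :
    φ x - φ z - ⟪φ' z, x - z⟫ + μ/2 * ‖x - z‖^2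
      + ‖(φ' x - φ' z) - μ • (x - z)‖^2 / (2*(M-μ)) ≤ ⟪φ' x - φ' z, x - z⟫ := by
  set g : E → ℝ := fun y => φ y - μ/2 * ‖y‖^2 with hg
  set g' : E → E := fun y => φ' y - μ • y with hg'
  have hm0 : (0:ℝ) < M - μ := by linarith
  have glow : ∀ a b : E, g b + ⟪g' b, a - b⟫ ≤ g a := by
    intro a b
    have h1 := hsc a b
    have h2 : μ/2 * ‖a - b‖^2 = μ/2 * (‖a‖^2 - ‖b‖^2 - 2*⟪b, a - b⟫) := by
      rw [norm_sub_sq_real']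
    have h3 : ⟪g' b, a - b⟫ = ⟪φ' b, a - b⟫ - μ * ⟪b, a - b⟫ := by
      simp only [hg', inner_sub_left, real_inner_smul_left]
    simp only [hg]
    rw [h3]
    linarith
  have gup : ∀ a b : E, g a ≤ g b + ⟪g' b, a - b⟫ + (M - μ)/2 * ‖a - b‖^2 := by
    intro a b
    have h1 := hup a b
    have h2 : μ/2 * ‖a - b‖^2 = μ/2 * (‖a‖^2 - ‖b‖^2 - 2*⟪b, a - b⟫) := by
      rw [norm_sub_sq_real']
    have h3 : ⟪g' b, a - b⟫ = ⟪φ' b, a - b⟫ - μ * ⟪b, a - b⟫ := by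
      simp only [hg', inner_sub_left, real_inner_smul_left]
    simp only [hg]
    rw [h3]
    linarith
  have hcoco := coco_aux hm0 glow gup z x
  have hd : ‖g' z - g' x‖ = ‖g' x - g' z‖ := norm_sub_rev _ _
  rw [hd] at hcoco
  -- hcoco : ‖g' x - g' z‖^2 ≤ 2*(M-μ)*(g z - g x - ⟪g' x, z - x⟫)
  have hdiv : ‖g' x - g' z‖^2 / (2*(M-μ)) ≤ g z - g x - ⟪g' x, z - x⟫ := by
    rw [div_le_iff₀ (by positivity)]
    linarith
  have hlow2 := glow x z
  -- identity: ⟪g' x - g' z, x - z⟫ = (g z - g x - ⟪g' x, z - x⟫) + (g x - g z - ⟪g' z, x - z⟫)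
  have hid : ⟪g' x - g' z, x - z⟫ = -⟪g' x, z - x⟫ - ⟪g' z, x - z⟫ := by
    rw [inner_sub_left, show (z:E) - x = -(x - z) from by abel, inner_neg_right]
    ring
  have hkeyg : g x - g z - ⟪g' z, x - z⟫ + ‖g' x - g' z‖^2 / (2*(M-μ))
      ≤ ⟪g' x - g' z, x - z⟫ := by
    rw [hid]; linarith
  -- translate to φ
  have t1 : g' x - g' z = (φ' x - φ' z) - μ • (x - z) := by
    simp only [hg', smul_sub]; abel
  have t2 : ⟪(φ' x - φ' z) - μ • (x - z), x - z⟫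
      = ⟪φ' x - φ' z, x - z⟫ - μ * ‖x - z‖^2 := by
    rw [inner_sub_left, real_inner_smul_left, real_inner_self_eq_norm_sq]
  have t3 : g x - g z - ⟪g' z, x - z⟫
      = φ x - φ z - ⟪φ' z, x - z⟫ - μ/2 * ‖x - z‖^2 := by
    have h2 : μ/2 * ‖x - z‖^2 = μ/2 * (‖x‖^2 - ‖z‖^2 - 2*⟪z, x - z⟫) := by
      rw [norm_sub_sq_real']
    have h3 : ⟪g' z, x - z⟫ = ⟪φ' z, x - z⟫ - μ * ⟪z, x - z⟫ := by
      simp only [hg', inner_sub_left, real_inner_smul_left]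
    simp only [hg]
    rw [h3]
    linarith
  rw [t1, t2, t3] at hkeyg
  linarith


lemma final_arith {N μ Lt γ β c ρ Sδ Sd Sg X PP EE : ℝ}
    (hN : 1 ≤ N)
    (hμ : 0 < μ) (hβ : 0 < β) (hγ : 0 < γ) (hc : 0 < c) (hM : μ < Lt) (hγμ : γ*μ < 1)
    (ha : 2*c*γ^2*Lt*(1+1/β) ≤ 1/N - ρ) (hb : 1/N ≤ 2*c*γ*(1-γ*μ)) (hcρ : ρ ≤ γ*μ)
    (hd : γ*(1+β)*(Lt-μ) ≤ 1 - γ*μ)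
    (hSδ : 0 ≤ Sδ) (hSd : 0 ≤ Sd) (hSg : 0 ≤ Sg) (hX : 0 ≤ X)
    (hE : EE ≤ 2*μ*PP - N*μ^2*X + (1+β)*Sg + (1+1/β)*(2*Lt*Sδ))
    (hKey : Sd + N*(μ/2)*X + Sg/(2*(Lt-μ)) ≤ PP) :
    (1/N)*(N*Sδ - Sδ + Sd) + c*(N*X - 2*γ*PP + γ^2*EE)
      ≤ N*(1-ρ)*((1/N)*Sδ + c*X) := by
  have hN0 : (0:ℝ) < N := by linarith
  have hN' : N ≠ 0 := ne_of_gt hN0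
  have hm : (0:ℝ) < Lt - μ := by linarith
  have hm' : Lt - μ ≠ 0 := ne_of_gt hm
  have hcγ2 : (0:ℝ) ≤ c*γ^2 := by positivity
  have s1 : c*γ^2*EE ≤ c*γ^2*(2*μ*PP - N*μ^2*X + (1+β)*Sg + (1+1/β)*(2*Lt*Sδ)) :=
    mul_le_mul_of_nonneg_left hE hcγ2
  have hco : (0:ℝ) ≤ 2*c*γ*(1-γ*μ) := by
    have : (0:ℝ) < 1/N := by positivity
    linarith
  have s2 : 2*c*γ*(1-γ*μ)*(Sd + N*(μ/2)*X + Sg/(2*(Lt-μ))) ≤ 2*c*γ*(1-γ*μ)*PP :=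
    mul_le_mul_of_nonneg_left hKey hco
  have t1 : (1 - 1/N + 2*c*γ^2*Lt*(1+1/β))*Sδ ≤ (1-ρ)*Sδ :=
    mul_le_mul_of_nonneg_right (by linarith) hSδ
  have t2 : (1/N)*Sd ≤ (2*c*γ*(1-γ*μ))*Sd :=
    mul_le_mul_of_nonneg_right hb hSd
  have t3 : c*N*(1-γ*μ)*X ≤ c*N*(1-ρ)*X := by
    have hcN : (0:ℝ) ≤ c*N := by positivity
    have : c*N*(1-γ*μ) ≤ c*N*(1-ρ) := by nlinarith
    exact mul_le_mul_of_nonneg_right this hX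
  have t4 : (c*γ^2*(1+β))*Sg ≤ (c*γ*(1-γ*μ)/(Lt-μ))*Sg := by
    have hdd : γ*(1+β) ≤ (1-γ*μ)/(Lt-μ) := by
      rw [le_div_iff₀ hm]; linarith [hd]
    have hcγ : (0:ℝ) ≤ c*γ := by positivity
    have h5 : c*γ^2*(1+β) ≤ c*γ*(1-γ*μ)/(Lt-μ) := by
      have h6 := mul_le_mul_of_nonneg_left hdd hcγ
      calc c*γ^2*(1+β) = c*γ*(γ*(1+β)) := by ring
        _ ≤ c*γ*((1-γ*μ)/(Lt-μ)) := h6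
        _ = c*γ*(1-γ*μ)/(Lt-μ) := by ring
    exact mul_le_mul_of_nonneg_right h5 hSg
  have e4 : 2*c*γ*(1-γ*μ)*(Sg/(2*(Lt-μ))) = (c*γ*(1-γ*μ)/(Lt-μ))*Sg := by
    field_simp
  have eL : (1/N)*(N*Sδ - Sδ + Sd) = Sδ - (1/N)*Sδ + (1/N)*Sd := by
    field_simp
  have eR : N*(1-ρ)*((1/N)*Sδ + c*X) = (1-ρ)*Sδ + c*N*(1-ρ)*X := by
    field_simp
  rw [eL, eR]
  linarith [s1, s2, t1, t2, t3, t4, e4]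


section helpers
lemma sum_dev {n : ℕ} (C : Fin n → E) (cb : E) (hcb : ∑ j, C j = (n:ℝ) • cb) :
    ∑ j, ‖C j - cb‖^2 = (∑ j, ‖C j‖^2) - (n:ℝ)*‖cb‖^2 := by
  have expand : ∀ j : Fin n, ‖C j - cb‖^2 = ‖C j‖^2 - 2*⟪C j, cb⟫ + ‖cb‖^2 := fun j => by
    rw [norm_sub_sq_real]
  rw [Finset.sum_congr rfl (fun j _ => expand j)]
  have h1 : ∑ j, (2:ℝ)*⟪C j, cb⟫ = 2*((n:ℝ)*‖cb‖^2) := by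
    rw [← Finset.mul_sum, ← sum_inner, hcb, real_inner_smul_left, real_inner_self_eq_norm_sq]
  have h2 : ∑ _j : Fin n, ‖cb‖^2 = (n:ℝ)*‖cb‖^2 := by
    rw [Finset.sum_const, Finset.card_univ, Fintype.card_fin, nsmul_eq_mul]
  rw [Finset.sum_add_distrib, Finset.sum_sub_distrib, h1, h2]
  ring
end helpers

set_option maxHeartbeats 1600000 in
lemma saga_one_step {n : ℕ} (hn : 0 < n) {μ Lt γ β c ρ : ℝ}
    (hμ : 0 < μ) (hβ : 0 < β) (hγ : 0 < γ) (hc : 0 < c) (hM : μ < Lt)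
    (hγμ : γ * μ < 1)
    (hcond_a : 2 * c * γ^2 * Lt * (1 + 1/β) ≤ 1/(n:ℝ) - ρ)
    (hcond_b : 1/(n:ℝ) ≤ 2 * c * γ * (1 - γ*μ))
    (hcond_c : ρ ≤ γ * μ)
    (hcond_d : γ * (1 + β) * (Lt - μ) ≤ 1 - γ * μ)
    (f : Fin n → E → ℝ) (f' : Fin n → E → E)
    (hsc : ∀ i (a b : E), f i b + ⟪f' i b, a - b⟫ + μ/2 * ‖a - b‖^2 ≤ f i a)
    (hup : ∀ i (a b : E), f i a ≤ f i b + ⟪f' i b, a - b⟫ + Lt / 2 * ‖a - b‖ ^ 2)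
    (h : E → ℝ) (hh : ConvexOn ℝ Set.univ h)
    (prox : E → E)
    (hprox : ∀ w y, h (prox w) + 1 / (2 * γ) * ‖prox w - w‖ ^ 2
        ≤ h y + 1 / (2 * γ) * ‖y - w‖ ^ 2)
    (xstar : E)
    (hfix : ∀ y, h xstar + 1 / (2 * γ) * ‖xstar - (xstar - γ • ((1 / (n:ℝ)) • ∑ i, f' i xstar))‖ ^ 2
        ≤ h y + 1 / (2 * γ) * ‖y - (xstar - γ • ((1 / (n:ℝ)) • ∑ i, f' i xstar))‖ ^ 2)
    (x : E) (φ : Fin n → E) :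
    ∑ j, ((1/(n:ℝ)) * (∑ i, (f i (Function.update φ j x i) - f i xstar
          - ⟪f' i xstar, Function.update φ j x i - xstar⟫))
        + c * ‖prox (x - γ • (f' j x - f' j (φ j) + (1 / (n:ℝ)) • ∑ i, f' i (φ i))) - xstar‖^2)
      ≤ (n:ℝ) * (1 - ρ) * ((1/(n:ℝ)) * (∑ i, (f i (φ i) - f i xstar - ⟪f' i xstar, φ i - xstar⟫))
        + c * ‖x - xstar‖^2) := by
  classical
  have hN0 : (0:ℝ) < (n:ℝ) := by exact_mod_cast hn
  have hN' : (n:ℝ) ≠ 0 := ne_of_gt hN0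
  have hN1 : (1:ℝ) ≤ (n:ℝ) := by exact_mod_cast hn
  have hLt : (0:ℝ) < Lt := lt_trans hμ hM
  have hlow : ∀ i (a b : E), f i b + ⟪f' i b, a - b⟫ ≤ f i a := by
    intro i a b
    have h1 := hsc i a b
    have h2 : (0:ℝ) ≤ μ/2 * ‖a - b‖^2 := by positivity
    linarith
  set N := (n:ℝ) with hNdef
  set a : E := x - xstar with hadef
  set Δ : Fin n → E := fun i => f' i x - f' i xstar with hΔdef
  set v : Fin n → E := fun i => f' i (φ i) - f' i xstar with hvdef
  set ubar : E := (1/N) • ∑ i, Δ i with hubardef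
  set vbar : E := (1/N) • ∑ i, v i with hvbardef
  set ug : E := ubar - μ • a with hugdef
  set e : Fin n → E := fun j => Δ j - v j + vbar with hedef
  set X := ‖a‖^2 with hXdef
  set Sδ := ∑ i, (f i (φ i) - f i xstar - ⟪f' i xstar, φ i - xstar⟫) with hSδdef
  set Sd := ∑ i, (f i x - f i xstar - ⟪f' i xstar, x - xstar⟫) with hSddef
  set Sg := ∑ i, ‖Δ i - μ • a‖^2 with hSgdef
  set PP : ℝ := ⟪∑ i, Δ i, a⟫ with hPPdef
  set EE := ∑ j, ‖e j‖^2 with hEEdef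
  -- nonnegativity
  have hδ0 : ∀ i, (0:ℝ) ≤ f i (φ i) - f i xstar - ⟪f' i xstar, φ i - xstar⟫ := by
    intro i; have := hlow i (φ i) xstar; linarith
  have hd0 : ∀ i, (0:ℝ) ≤ f i x - f i xstar - ⟪f' i xstar, x - xstar⟫ := by
    intro i; have := hlow i x xstar; linarith
  have hSδ0 : 0 ≤ Sδ := Finset.sum_nonneg fun i _ => hδ0 i
  have hSd0 : 0 ≤ Sd := Finset.sum_nonneg fun i _ => hd0 i
  have hSg0 : 0 ≤ Sg := Finset.sum_nonneg fun i _ => by positivity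
  have hX0 : 0 ≤ X := sq_nonneg _
  have hNsmul : ∀ (S : E), N • ((1/N) • S) = S := by
    intro S; rw [smul_smul, mul_one_div_cancel hN', one_smul]
  have hsum_v' : ∑ j, v j = N • vbar := by rw [hvbardef, hNsmul]
  have hsum_Δ' : ∑ i, Δ i = N • ubar := by rw [hubardef, hNsmul]
  have hsum_e : ∑ j, e j = ∑ i, Δ i := by
    have h1 : ∀ j : Fin n, e j = Δ j - v j + vbar := fun j => rfl
    rw [Finset.sum_congr rfl fun j _ => h1 j, Finset.sum_add_distrib, Finset.sum_sub_distrib,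
      Finset.sum_const, Finset.card_univ, Fintype.card_fin,
      ← Nat.cast_smul_eq_nsmul ℝ n vbar, ← hNdef, ← hsum_v']
    abel
  have hsum_e' : ∑ j, e j = N • ubar := by rw [hsum_e, hsum_Δ']
  -- Step A : prox contraction
  have hA : ∀ j, ‖prox (x - γ • (f' j x - f' j (φ j) + (1 / N) • ∑ i, f' i (φ i))) - xstar‖^2
      ≤ ‖a - γ • e j‖^2 := by
    intro j
    have hcontr := prox_contract hh hγ
      (fun y => hprox (x - γ • (f' j x - f' j (φ j) + (1 / N) • ∑ i, f' i (φ i))) y) hfix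
    have hwdiff : (x - γ • (f' j x - f' j (φ j) + (1 / N) • ∑ i, f' i (φ i)))
        - (xstar - γ • ((1 / N) • ∑ i, f' i xstar)) = a - γ • e j := by
      simp only [hedef, hvbardef, hvdef, hΔdef, hadef, Finset.sum_sub_distrib]
      module
    rw [hwdiff] at hcontr
    exact hcontr
  -- Step B : expansion of the w-distance
  have hB : ∑ j, ‖a - γ • e j‖^2 = N*X - 2*γ*PP + γ^2*EE := by
    have expand : ∀ j : Fin n, ‖a - γ • e j‖^2
        = X - 2*(γ*⟪a, e j⟫) + γ^2*‖e j‖^2 := by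
      intro j
      have h1 : ‖γ • e j‖^2 = γ^2 * ‖e j‖^2 := by
        rw [norm_smul, mul_pow, Real.norm_eq_abs, sq_abs]
      rw [norm_sub_sq_real, real_inner_smul_right, h1, hXdef]
    rw [Finset.sum_congr rfl fun j _ => expand j]
    rw [Finset.sum_add_distrib, Finset.sum_sub_distrib, Finset.sum_const, Finset.card_univ,
      Fintype.card_fin, nsmul_eq_mul, ← hNdef]
    have h2 : ∑ j, 2*(γ*⟪a, e j⟫) = 2*γ*PP := by
      have h3 : ∀ j : Fin n, 2*(γ*⟪a, e j⟫) = (2*γ)*⟪a, e j⟫ := fun j => by ring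
      rw [Finset.sum_congr rfl fun j _ => h3 j, ← Finset.mul_sum, ← inner_sum, hsum_e,
        hPPdef, real_inner_comm]
    have h3 : ∑ j, γ^2*‖e j‖^2 = γ^2*EE := by
      rw [← Finset.mul_sum, hEEdef]
    rw [h2, h3]
  -- Step C : second moment bound
  have hEbound : EE ≤ 2*μ*PP - N*μ^2*X + (1+β)*Sg + (1+1/β)*(2*Lt*Sδ) := by
    have hdev_e : ∑ j, ‖e j - ubar‖^2 = EE - N*‖ubar‖^2 := sum_dev e ubar hsum_e'
    have hsum_Δμ : ∑ j, (Δ j - μ • a) = N • ug := by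
      rw [Finset.sum_sub_distrib, Finset.sum_const, Finset.card_univ, Fintype.card_fin,
        ← Nat.cast_smul_eq_nsmul ℝ n (μ • a), ← hNdef, hsum_Δ', hugdef]
      module
    have hdev_Δ : ∑ j, ‖Δ j - ubar‖^2 = Sg - N*‖ug‖^2 := by
      have h1 := sum_dev (fun j => Δ j - μ • a) ug hsum_Δμ
      have h2 : ∀ j : Fin n, (Δ j - μ • a) - ug = Δ j - ubar := by
        intro j; rw [hugdef]; abel
      rw [Finset.sum_congr rfl fun j _ => congrArg (fun z => ‖z‖^2) (h2 j)] at h1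
      rw [h1, hSgdef]
    have hdev_v : ∑ j, ‖v j - vbar‖^2 = (∑ j, ‖v j‖^2) - N*‖vbar‖^2 :=
      sum_dev v vbar hsum_v'
    have hSv : ∑ j, ‖v j‖^2 ≤ 2*Lt*Sδ := by
      rw [hSδdef, Finset.mul_sum]
      exact Finset.sum_le_sum fun i _ => coco_aux hLt (hlow i) (hup i) (φ i) xstar
    have hyoung : ∀ j : Fin n, ‖e j - ubar‖^2
        ≤ (1+β)*‖Δ j - ubar‖^2 + (1+1/β)*‖v j - vbar‖^2 := by
      intro j
      have h1 : e j - ubar = (Δ j - ubar) - (v j - vbar) := by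
        have : e j = Δ j - v j + vbar := rfl
        rw [this]; abel
      rw [h1]
      exact young_ineq_s12 hβ _ _
    have hsum_young : ∑ j, ‖e j - ubar‖^2
        ≤ (1+β)*(Sg - N*‖ug‖^2) + (1+1/β)*((∑ j, ‖v j‖^2) - N*‖vbar‖^2) := by
      calc ∑ j, ‖e j - ubar‖^2
          ≤ ∑ j, ((1+β)*‖Δ j - ubar‖^2 + (1+1/β)*‖v j - vbar‖^2) :=
            Finset.sum_le_sum fun j _ => hyoung j
        _ = (1+β)*(∑ j, ‖Δ j - ubar‖^2) + (1+1/β)*(∑ j, ‖v j - vbar‖^2) := by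
            rw [Finset.sum_add_distrib, ← Finset.mul_sum, ← Finset.mul_sum]
        _ = (1+β)*(Sg - N*‖ug‖^2) + (1+1/β)*((∑ j, ‖v j‖^2) - N*‖vbar‖^2) := by
            rw [hdev_Δ, hdev_v]
    have hU : N*‖ubar‖^2 = N*‖ug‖^2 + 2*μ*PP - N*μ^2*X := by
      have h1 : ubar = ug + μ • a := by rw [hugdef]; abel
      have h2 : ‖ubar‖^2 = ‖ug‖^2 + 2*(μ*⟪ug, a⟫) + μ^2*X := by
        calc ‖ubar‖^2 = ‖ug + μ • a‖^2 := by rw [← h1]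
          _ = ‖ug‖^2 + 2*⟪ug, μ • a⟫ + ‖μ • a‖^2 := norm_add_sq_real _ _
          _ = ‖ug‖^2 + 2*(μ*⟪ug, a⟫) + μ^2*X := by
              rw [real_inner_smul_right, norm_smul, mul_pow, Real.norm_eq_abs, sq_abs, hXdef]
      have h3 : ⟪ug, a⟫ = (1/N)*PP - μ*X := by
        rw [hugdef, inner_sub_left, real_inner_smul_left, real_inner_smul_left,
          real_inner_self_eq_norm_sq, hPPdef, hXdef]
      have h4 : N*((1/N)*PP) = PP := by field_simp
      rw [h2, h3]
      calc N*(‖ug‖^2 + 2*(μ*((1/N)*PP - μ*X)) + μ^2*X)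
          = N*‖ug‖^2 + 2*μ*(N*((1/N)*PP)) - N*μ^2*X := by ring
        _ = N*‖ug‖^2 + 2*μ*PP - N*μ^2*X := by rw [h4]
    have hq1 : (1+β)*(Sg - N*‖ug‖^2) ≤ (1+β)*Sg - N*‖ug‖^2 := by
      have hb1 : (0:ℝ) ≤ β*(N*‖ug‖^2) := by positivity
      nlinarith
    have hq2 : (1+1/β)*((∑ j, ‖v j‖^2) - N*‖vbar‖^2) ≤ (1+1/β)*(2*Lt*Sδ) := by
      apply mul_le_mul_of_nonneg_left _ (by positivity : (0:ℝ) ≤ 1+1/β)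
      have : (0:ℝ) ≤ N*‖vbar‖^2 := by positivity
      linarith
    have hEE_split : EE = N*‖ubar‖^2 + ∑ j, ‖e j - ubar‖^2 := by
      rw [hdev_e]; ring
    have hNug : (0:ℝ) ≤ N*‖ug‖^2 := by positivity
    rw [hEE_split, hU]
    linarith [hsum_young, hq1, hq2]
  -- Step D : key inequality
  have hKey : Sd + N*(μ/2)*X + Sg/(2*(Lt-μ)) ≤ PP := by
    have hper : ∀ i : Fin n, (f i x - f i xstar - ⟪f' i xstar, x - xstar⟫) + μ/2 * X
        + ‖Δ i - μ • a‖^2 / (2*(Lt-μ)) ≤ ⟪Δ i, a⟫ :=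
      fun i => key_ineq_s12 hμ hM (hsc i) (hup i) x xstar
    have hsummed := Finset.sum_le_sum fun i (_ : i ∈ Finset.univ) => hper i
    rw [Finset.sum_add_distrib, Finset.sum_add_distrib, Finset.sum_const, Finset.card_univ,
      Fintype.card_fin, nsmul_eq_mul, ← hNdef] at hsummed
    have h1 : ∑ i, ‖Δ i - μ • a‖^2 / (2*(Lt-μ)) = Sg/(2*(Lt-μ)) := by
      rw [hSgdef, Finset.sum_div]
    have h2 : ∑ i, ⟪Δ i, a⟫ = PP := by rw [hPPdef, sum_inner]
    rw [h1, h2, ← hSddef] at hsummed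
    have h3 : N*(μ/2)*X = N*(μ/2*X) := by ring
    rw [h3]
    linarith
  -- Step E : update sums
  have hupd : ∀ j : Fin n, (∑ i, (f i (Function.update φ j x i) - f i xstar
        - ⟪f' i xstar, Function.update φ j x i - xstar⟫))
      = Sδ - (f j (φ j) - f j xstar - ⟪f' j xstar, φ j - xstar⟫)
        + (f j x - f j xstar - ⟪f' j xstar, x - xstar⟫) := by
    intro j
    have hfun : ∀ i : Fin n, (f i (Function.update φ j x i) - f i xstar
          - ⟪f' i xstar, Function.update φ j x i - xstar⟫)
        = Function.update (fun i => f i (φ i) - f i xstar - ⟪f' i xstar, φ i - xstar⟫) j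
            (f j x - f j xstar - ⟪f' j xstar, x - xstar⟫) i := by
      intro i
      rcases eq_or_ne i j with rfl | hij
      · simp [Function.update_self]
      · simp [Function.update_of_ne hij]
    rw [Finset.sum_congr rfl fun i _ => hfun i,
      Finset.sum_update_of_mem (Finset.mem_univ j),
      Finset.sdiff_singleton_eq_erase,
      Finset.sum_erase_eq_sub (Finset.mem_univ j), ← hSδdef]
    ring
  -- Final assembly
  have hLHS : ∑ j, ((1/N) * (∑ i, (f i (Function.update φ j x i) - f i xstar
        - ⟪f' i xstar, Function.update φ j x i - xstar⟫))
        + c * ‖prox (x - γ • (f' j x - f' j (φ j) + (1 / N) • ∑ i, f' i (φ i))) - xstar‖^2)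
      ≤ (1/N)*(N*Sδ - Sδ + Sd) + c*(N*X - 2*γ*PP + γ^2*EE) := by
    rw [Finset.sum_add_distrib]
    have e1 : ∑ j, (1/N) * (∑ i, (f i (Function.update φ j x i) - f i xstar
        - ⟪f' i xstar, Function.update φ j x i - xstar⟫)) = (1/N)*(N*Sδ - Sδ + Sd) := by
      rw [← Finset.mul_sum]
      congr 1
      rw [Finset.sum_congr rfl fun j _ => hupd j]
      rw [Finset.sum_add_distrib, Finset.sum_sub_distrib, Finset.sum_const, Finset.card_univ,
        Fintype.card_fin, nsmul_eq_mul, ← hNdef, ← hSδdef, ← hSddef]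
    have e2 : ∑ j, c * ‖prox (x - γ • (f' j x - f' j (φ j) + (1 / N) • ∑ i, f' i (φ i)))
          - xstar‖^2 ≤ c*(N*X - 2*γ*PP + γ^2*EE) := by
      calc ∑ j, c * ‖prox (x - γ • (f' j x - f' j (φ j) + (1 / N) • ∑ i, f' i (φ i)))
            - xstar‖^2
          = c * ∑ j, ‖prox (x - γ • (f' j x - f' j (φ j) + (1 / N) • ∑ i, f' i (φ i)))
            - xstar‖^2 := (Finset.mul_sum _ _ _).symm
        _ ≤ c * ∑ j, ‖a - γ • e j‖^2 :=
            mul_le_mul_of_nonneg_left (Finset.sum_le_sum fun j _ => hA j) (le_of_lt hc)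
        _ = c*(N*X - 2*γ*PP + γ^2*EE) := by rw [hB]
    rw [e1]
    exact add_le_add le_rfl e2
  exact le_trans hLHS (final_arith hN1 hμ hβ hγ hc hM hγμ hcond_a hcond_b hcond_c hcond_d
    hSδ0 hSd0 hSg0 hX0 hEbound hKey)


lemma fix_min {n : ℕ} {γ L : ℝ} (hγ : 0 < γ) (hγL : γ*L ≤ 1)
    (f : Fin n → E → ℝ) (f' : Fin n → E → E)
    (hupL : ∀ i (a b : E), f i a ≤ f i b + ⟪f' i b, a - b⟫ + L/2 * ‖a - b‖^2)
    (h : E → ℝ) (xstar : E)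
    (hstar : ∀ y, (1/(n:ℝ)) * ∑ i, f i xstar + h xstar
      ≤ (1/(n:ℝ)) * ∑ i, f i y + h y) :
    ∀ y, h xstar + 1/(2*γ) * ‖xstar - (xstar - γ • ((1/(n:ℝ)) • ∑ i, f' i xstar))‖^2
      ≤ h y + 1/(2*γ) * ‖y - (xstar - γ • ((1/(n:ℝ)) • ∑ i, f' i xstar))‖^2 := by
  intro y
  rcases Nat.eq_zero_or_pos n with rfl | hn
  · -- n = 0 : sums are empty, hstar gives h xstar ≤ h y directly
    have h0 := hstar y
    simp only [Finset.univ_eq_empty, Finset.sum_empty, smul_zero, mul_zero] at h0 ⊢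
    rw [show xstar - (xstar - 0) = (0:E) from by abel, show y - (xstar - 0) = y - xstar from by abel]
    have h1 : (0:ℝ) ≤ 1/(2*γ) * ‖y - xstar‖^2 := by positivity
    simp only [norm_zero]
    nlinarith
  have hN0 : (0:ℝ) < (n:ℝ) := by exact_mod_cast hn
  have hN' : (n:ℝ) ≠ 0 := ne_of_gt hN0
  set G : E := (1/(n:ℝ)) • ∑ i, f' i xstar with hG
  have e1 : xstar - (xstar - γ • G) = γ • G := by abel
  have e2 : y - (xstar - γ • G) = (y - xstar) + γ • G := by abel
  rw [e1, e2, norm_add_sq_real, real_inner_smul_right]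
  have hnorm : ‖γ • G‖^2 = γ^2*‖G‖^2 := by
    rw [norm_smul, mul_pow, Real.norm_eq_abs, sq_abs]
  rw [hnorm]
  have hsum : (1/(n:ℝ)) * ∑ i, f i y - (1/(n:ℝ)) * ∑ i, f i xstar
      ≤ ⟪y - xstar, G⟫ + L/2 * ‖y - xstar‖^2 := by
    have hper := Finset.sum_le_sum fun i (_ : i ∈ Finset.univ) => hupL i y xstar
    rw [Finset.sum_add_distrib, Finset.sum_add_distrib, Finset.sum_const, Finset.card_univ,
      Fintype.card_fin, nsmul_eq_mul] at hper
    have hmul := mul_le_mul_of_nonneg_left hper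
      (le_of_lt (by positivity : (0:ℝ) < 1/(n:ℝ)))
    have hinner : ⟪y - xstar, G⟫ = (1/(n:ℝ)) * ∑ i, ⟪f' i xstar, y - xstar⟫ := by
      rw [real_inner_comm, hG, real_inner_smul_left, sum_inner]
    have hcancel : (1/(n:ℝ))*((n:ℝ)*(L/2*‖y - xstar‖^2)) = L/2*‖y - xstar‖^2 := by
      field_simp
    rw [hinner]
    nlinarith [hmul, hcancel]
  have hcγ : 1/(2*γ)*(2*(γ*⟪y - xstar, G⟫)) = ⟪y - xstar, G⟫ := by
    field_simp
  have hL2 : L/2*‖y - xstar‖^2 ≤ 1/(2*γ)*‖y - xstar‖^2 := by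
    apply mul_le_mul_of_nonneg_right _ (sq_nonneg _)
    rw [div_le_div_iff₀ (by norm_num : (0:ℝ) < 2) (by positivity : (0:ℝ) < 2*γ)]
    nlinarith
  have hst := hstar y
  have hexpand : 1/(2*γ)*(‖y - xstar‖^2 + 2*(γ*⟪y - xstar, G⟫) + γ^2*‖G‖^2)
      = 1/(2*γ)*‖y - xstar‖^2 + ⟪y - xstar, G⟫ + 1/(2*γ)*(γ^2*‖G‖^2) := by
    rw [mul_add, mul_add, hcγ]
  rw [hexpand]
  linarith


end AuxAnalysis

lemma extSeq_snoc {n : ℕ} (hn : 0 < n) {k : ℕ} (js : Fin k → Fin n) (j : Fin n)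
    (t : ℕ) (ht : t < k) : extSeq hn (Fin.snoc js j) t = extSeq hn js t := by
  unfold extSeq
  rw [dif_pos (ht.trans (Nat.lt_succ_self k)), dif_pos ht]
  have h1 : (⟨t, ht.trans (Nat.lt_succ_self k)⟩ : Fin (k+1)) = Fin.castSucc ⟨t, ht⟩ := rfl
  rw [h1, Fin.snoc_castSucc]

lemma extSeq_last {n : ℕ} (hn : 0 < n) {k : ℕ} (js : Fin k → Fin n) (j : Fin n) :
    extSeq hn (Fin.snoc js j) k = j := by
  unfold extSeq
  rw [dif_pos (Nat.lt_succ_self k)]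
  have h1 : (⟨k, Nat.lt_succ_self k⟩ : Fin (k+1)) = Fin.last k := rfl
  rw [h1, Fin.snoc_last]

lemma sagaIter_congr (d n : ℕ) (γ : ℝ)
    (f' : Fin n → EuclideanSpace ℝ (Fin d) → EuclideanSpace ℝ (Fin d))
    (prox : EuclideanSpace ℝ (Fin d) → EuclideanSpace ℝ (Fin d))
    (x0 : EuclideanSpace ℝ (Fin d)) {js1 js2 : ℕ → Fin n} :
    ∀ k, (∀ t, t < k → js1 t = js2 t) →
      sagaIter d n γ f' prox x0 js1 k = sagaIter d n γ f' prox x0 js2 k := by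
  intro k
  induction k with
  | zero => intro _; rfl
  | succ k ih =>
    intro hlt
    have h1 := ih (fun t ht => hlt t (ht.trans (Nat.lt_succ_self k)))
    simp only [sagaIter]
    rw [h1, hlt k (Nat.lt_succ_self k)]

lemma saga_induction (d n : ℕ) (hn : 0 < n) (γ : ℝ)
    (f' : Fin n → EuclideanSpace ℝ (Fin d) → EuclideanSpace ℝ (Fin d))
    (prox : EuclideanSpace ℝ (Fin d) → EuclideanSpace ℝ (Fin d))
    (x0 : EuclideanSpace ℝ (Fin d))
    (V : EuclideanSpace ℝ (Fin d) × (Fin n → EuclideanSpace ℝ (Fin d)) → ℝ)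
    (ρ : ℝ) (h1ρ : 0 ≤ 1 - ρ)
    (hstep : ∀ (x : EuclideanSpace ℝ (Fin d)) (φ : Fin n → EuclideanSpace ℝ (Fin d)),
      ∑ j, V (prox (sagaW d n γ f' x φ j), Function.update φ j x) ≤ (n:ℝ)*(1-ρ)*V (x, φ)) :
    ∀ k, ∑ js : Fin k → Fin n, V (sagaIter d n γ f' prox x0 (extSeq hn js) k)
      ≤ ((n:ℝ)*(1-ρ))^k * V (x0, fun _ => x0) := by
  intro k
  induction k with
  | zero =>
    rw [pow_zero, one_mul]
    have h0 : ∀ js : Fin 0 → Fin n,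
        sagaIter d n γ f' prox x0 (extSeq hn js) 0 = (x0, fun _ => x0) := fun _ => rfl
    rw [Finset.sum_congr rfl fun js _ => congrArg V (h0 js), Finset.sum_const,
      Finset.card_univ]
    simp
  | succ k ih =>
    have hsum : ∑ js : Fin (k+1) → Fin n, V (sagaIter d n γ f' prox x0 (extSeq hn js) (k+1))
        = ∑ p : Fin n × (Fin k → Fin n),
            V (sagaIter d n γ f' prox x0 (extSeq hn (Fin.snoc p.2 p.1)) (k+1)) := by
      rw [← Equiv.sum_comp (Fin.snocEquiv (fun _ => Fin n))
        (fun js => V (sagaIter d n γ f' prox x0 (extSeq hn js) (k+1)))]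
      apply Finset.sum_congr rfl
      intro p _
      congr 1
    have hstepval : ∀ (p : Fin n × (Fin k → Fin n)),
        sagaIter d n γ f' prox x0 (extSeq hn (Fin.snoc p.2 p.1)) (k+1)
        = (prox (sagaW d n γ f' (sagaIter d n γ f' prox x0 (extSeq hn p.2) k).1
              (sagaIter d n γ f' prox x0 (extSeq hn p.2) k).2 p.1),
           Function.update (sagaIter d n γ f' prox x0 (extSeq hn p.2) k).2 p.1
              (sagaIter d n γ f' prox x0 (extSeq hn p.2) k).1) := by
      intro p
      have hcongr : sagaIter d n γ f' prox x0 (extSeq hn (Fin.snoc p.2 p.1)) k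
          = sagaIter d n γ f' prox x0 (extSeq hn p.2) k :=
        sagaIter_congr d n γ f' prox x0 k (fun t ht => extSeq_snoc hn p.2 p.1 t ht)
      have hlast : extSeq hn (Fin.snoc p.2 p.1) k = p.1 := extSeq_last hn p.2 p.1
      simp only [sagaIter]
      rw [hcongr, hlast]
    rw [hsum, Finset.sum_congr rfl fun p _ => congrArg V (hstepval p), Fintype.sum_prod_type]
    rw [Finset.sum_comm]
    calc ∑ js : Fin k → Fin n, ∑ j : Fin n,
          V (prox (sagaW d n γ f' (sagaIter d n γ f' prox x0 (extSeq hn js) k).1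
              (sagaIter d n γ f' prox x0 (extSeq hn js) k).2 j),
             Function.update (sagaIter d n γ f' prox x0 (extSeq hn js) k).2 j
              (sagaIter d n γ f' prox x0 (extSeq hn js) k).1)
        ≤ ∑ js : Fin k → Fin n, (n:ℝ)*(1-ρ)*V (sagaIter d n γ f' prox x0 (extSeq hn js) k) := by
          apply Finset.sum_le_sum
          intro js _
          have := hstep (sagaIter d n γ f' prox x0 (extSeq hn js) k).1
            (sagaIter d n γ f' prox x0 (extSeq hn js) k).2
          simpa using this
      _ = (n:ℝ)*(1-ρ) * ∑ js : Fin k → Fin n, V (sagaIter d n γ f' prox x0 (extSeq hn js) k) := by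
          rw [Finset.mul_sum]
      _ ≤ (n:ℝ)*(1-ρ) * (((n:ℝ)*(1-ρ))^k * V (x0, fun _ => x0)) := by
          apply mul_le_mul_of_nonneg_left ih
          exact mul_nonneg (Nat.cast_nonneg n) h1ρ
      _ = ((n:ℝ)*(1-ρ))^(k+1) * V (x0, fun _ => x0) := by ring

set_option maxHeartbeats 1000000 in
lemma saga_main_core (d n k : ℕ) (hn : 0 < n) (μ L Lt γ β c ρ : ℝ)
    (hμ : 0 < μ) (hμL : μ ≤ L) (hγ : 0 < γ) (hβ : 0 < β) (hc : 0 < c)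
    (hMc : μ < Lt) (hLLt : L ≤ Lt) (hγμ : γ*μ < 1) (hγL : γ*L ≤ 1)
    (hcond_a : 2 * c * γ^2 * Lt * (1 + 1/β) ≤ 1/(n:ℝ) - ρ)
    (hcond_b : 1/(n:ℝ) ≤ 2 * c * γ * (1 - γ*μ))
    (hcond_c : ρ ≤ γ * μ)
    (hcond_d : γ * (1 + β) * (Lt - μ) ≤ 1 - γ * μ)
    (f : Fin n → EuclideanSpace ℝ (Fin d) → ℝ)
    (f' : Fin n → EuclideanSpace ℝ (Fin d) → EuclideanSpace ℝ (Fin d))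
    (hgrad : ∀ i x, HasGradientAt (f i) (f' i x) x)
    (hsmooth : ∀ i x y, ‖f' i x - f' i y‖ ≤ L * ‖x - y‖)
    (hsc : ∀ i x y, f i x ≥ f i y + ⟪f' i y, x - y⟫ + μ / 2 * ‖x - y‖ ^ 2)
    (h : EuclideanSpace ℝ (Fin d) → ℝ) (hh : ConvexOn ℝ Set.univ h)
    (xstar : EuclideanSpace ℝ (Fin d))
    (hstar : ∀ y, (1 / (n : ℝ)) * ∑ i, f i xstar + h xstar
        ≤ (1 / (n : ℝ)) * ∑ i, f i y + h y)
    (prox : EuclideanSpace ℝ (Fin d) → EuclideanSpace ℝ (Fin d))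
    (hprox : ∀ w y, h (prox w) + 1 / (2 * γ) * ‖prox w - w‖ ^ 2
        ≤ h y + 1 / (2 * γ) * ‖y - w‖ ^ 2)
    (x0 : EuclideanSpace ℝ (Fin d)) :
    (1 / (n : ℝ) ^ k) * ∑ js : Fin k → Fin n,
        ‖(sagaIter d n γ f' prox x0 (extSeq hn js) k).1 - xstar‖ ^ 2
      ≤ (1 - ρ) ^ k * (‖x0 - xstar‖ ^ 2
          + (1/c) * ((1 / (n : ℝ)) * ∑ i, f i x0
            - ⟪(1 / (n : ℝ)) • ∑ i, f' i xstar, x0 - xstar⟫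
            - (1 / (n : ℝ)) * ∑ i, f i xstar)) := by
  have hL : (0:ℝ) < L := lt_of_lt_of_le hμ hμL
  have hN0 : (0:ℝ) < (n:ℝ) := by exact_mod_cast hn
  have hN' : (n:ℝ) ≠ 0 := ne_of_gt hN0
  have hsc' : ∀ i (a b : EuclideanSpace ℝ (Fin d)),
      f i b + ⟪f' i b, a - b⟫ + μ/2 * ‖a - b‖^2 ≤ f i a := fun i a b => hsc i a b
  have hupL : ∀ i (a b : EuclideanSpace ℝ (Fin d)),
      f i a ≤ f i b + ⟪f' i b, a - b⟫ + L/2 * ‖a - b‖^2 := fun i a b =>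
    smooth_descent hL.le (hgrad i) (hsmooth i) b a
  have hupLt : ∀ i (a b : EuclideanSpace ℝ (Fin d)),
      f i a ≤ f i b + ⟪f' i b, a - b⟫ + Lt/2 * ‖a - b‖^2 := by
    intro i a b
    have h1 := hupL i a b
    have h2 := mul_le_mul_of_nonneg_right hLLt (sq_nonneg ‖a - b‖)
    linarith
  have hlow : ∀ i (a b : EuclideanSpace ℝ (Fin d)),
      f i b + ⟪f' i b, a - b⟫ ≤ f i a := by
    intro i a b
    have h1 := hsc' i a b
    have h2 : (0:ℝ) ≤ μ/2 * ‖a - b‖^2 := by positivity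
    linarith
  have hfix := fix_min hγ hγL f f' hupL h xstar hstar
  have h1ρ : (0:ℝ) ≤ 1 - ρ := by nlinarith
  have hstep : ∀ (x : EuclideanSpace ℝ (Fin d)) (φ : Fin n → EuclideanSpace ℝ (Fin d)),
      ∑ j, ((fun s : EuclideanSpace ℝ (Fin d) × (Fin n → EuclideanSpace ℝ (Fin d)) =>
          (1/(n:ℝ)) * (∑ i, (f i (s.2 i) - f i xstar - ⟪f' i xstar, s.2 i - xstar⟫))
            + c*‖s.1 - xstar‖^2)
          (prox (sagaW d n γ f' x φ j), Function.update φ j x))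
        ≤ (n:ℝ)*(1-ρ)*((fun s : EuclideanSpace ℝ (Fin d) × (Fin n → EuclideanSpace ℝ (Fin d)) =>
          (1/(n:ℝ)) * (∑ i, (f i (s.2 i) - f i xstar - ⟪f' i xstar, s.2 i - xstar⟫))
            + c*‖s.1 - xstar‖^2) (x, φ)) := by
    intro x φ
    have hos := saga_one_step hn hμ hβ hγ hc hMc hγμ hcond_a hcond_b hcond_c hcond_d
      f f' hsc' hupLt h hh prox hprox xstar hfix x φ
    simpa only [sagaW] using hos
  have hind := saga_induction d n hn γ f' prox x0
    (fun s => (1/(n:ℝ)) * (∑ i, (f i (s.2 i) - f i xstar - ⟪f' i xstar, s.2 i - xstar⟫))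
        + c*‖s.1 - xstar‖^2) ρ h1ρ hstep k
  simp only at hind
  have hVlow : ∀ js : Fin k → Fin n,
      c*‖(sagaIter d n γ f' prox x0 (extSeq hn js) k).1 - xstar‖^2
      ≤ (1/(n:ℝ)) * (∑ i, (f i ((sagaIter d n γ f' prox x0 (extSeq hn js) k).2 i) - f i xstar
          - ⟪f' i xstar, (sagaIter d n γ f' prox x0 (extSeq hn js) k).2 i - xstar⟫))
        + c*‖(sagaIter d n γ f' prox x0 (extSeq hn js) k).1 - xstar‖^2 := by
    intro js
    have hpos : (0:ℝ) ≤ (1/(n:ℝ)) * (∑ i, (f i ((sagaIter d n γ f' prox x0 (extSeq hn js) k).2 i)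
        - f i xstar - ⟪f' i xstar, (sagaIter d n γ f' prox x0 (extSeq hn js) k).2 i - xstar⟫)) := by
      apply mul_nonneg (by positivity)
      apply Finset.sum_nonneg
      intro i _
      have := hlow i ((sagaIter d n γ f' prox x0 (extSeq hn js) k).2 i) xstar
      linarith
    linarith
  have hS : c * ∑ js : Fin k → Fin n,
      ‖(sagaIter d n γ f' prox x0 (extSeq hn js) k).1 - xstar‖^2
      ≤ ((n:ℝ)*(1-ρ))^k * ((1/(n:ℝ)) * (∑ i, (f i x0 - f i xstar - ⟪f' i xstar, x0 - xstar⟫))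
        + c*‖x0 - xstar‖^2) := by
    rw [Finset.mul_sum]
    exact le_trans (Finset.sum_le_sum fun js _ => hVlow js) hind
  have hBD : (1 / (n : ℝ)) * ∑ i, f i x0
      - ⟪(1 / (n : ℝ)) • ∑ i, f' i xstar, x0 - xstar⟫ - (1 / (n : ℝ)) * ∑ i, f i xstar
      = (1/(n:ℝ)) * (∑ i, (f i x0 - f i xstar - ⟪f' i xstar, x0 - xstar⟫)) := by
    rw [real_inner_smul_left, sum_inner, Finset.sum_sub_distrib, Finset.sum_sub_distrib]
    ring
  rw [hBD]
  have hNk : (0:ℝ) < (n:ℝ)^k := by positivity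
  have h2 : (1-ρ)^k * (‖x0 - xstar‖^2
        + (1/c) * ((1/(n:ℝ)) * (∑ i, (f i x0 - f i xstar - ⟪f' i xstar, x0 - xstar⟫))))
      = (1/(c*(n:ℝ)^k)) * (((n:ℝ)*(1-ρ))^k * ((1/(n:ℝ)) * (∑ i, (f i x0 - f i xstar
          - ⟪f' i xstar, x0 - xstar⟫)) + c*‖x0 - xstar‖^2)) := by
    rw [mul_pow]
    field_simp
    ring
  have h3 : (1 / (n:ℝ)^k) * ∑ js : Fin k → Fin n,
      ‖(sagaIter d n γ f' prox x0 (extSeq hn js) k).1 - xstar‖^2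
      = (1/(c*(n:ℝ)^k)) * (c * ∑ js : Fin k → Fin n,
        ‖(sagaIter d n γ f' prox x0 (extSeq hn js) k).1 - xstar‖^2) := by
    field_simp
  rw [h2, h3]
  exact mul_le_mul_of_nonneg_left hS (by positivity)

set_option maxHeartbeats 1600000 in
theorem saga_convergence_strongly_convex (d n k : ℕ) (hn : 0 < n) (μ L γ : ℝ)
    (hμ : 0 < μ) (hμL : μ ≤ L) (hγ : 0 < γ)
    (f : Fin n → EuclideanSpace ℝ (Fin d) → ℝ)
    (f' : Fin n → EuclideanSpace ℝ (Fin d) → EuclideanSpace ℝ (Fin d))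
    (hgrad : ∀ i x, HasGradientAt (f i) (f' i x) x)
    (hconv : ∀ i, ConvexOn ℝ Set.univ (f i))
    (hsmooth : ∀ i x y, ‖f' i x - f' i y‖ ≤ L * ‖x - y‖)
    (hsc : ∀ i x y, f i x ≥ f i y + ⟪f' i y, x - y⟫ + μ / 2 * ‖x - y‖ ^ 2)
    (h : EuclideanSpace ℝ (Fin d) → ℝ) (hh : ConvexOn ℝ Set.univ h)
    (xstar : EuclideanSpace ℝ (Fin d))
    (hstar : ∀ y, (1 / (n : ℝ)) * ∑ i, f i xstar + h xstar
        ≤ (1 / (n : ℝ)) * ∑ i, f i y + h y)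
    (prox : EuclideanSpace ℝ (Fin d) → EuclideanSpace ℝ (Fin d))
    (hprox : ∀ w y, h (prox w) + 1 / (2 * γ) * ‖prox w - w‖ ^ 2
        ≤ h y + 1 / (2 * γ) * ‖y - w‖ ^ 2)
    (x0 : EuclideanSpace ℝ (Fin d)) :
    (γ = 1 / (2 * (μ * n + L)) →
      (1 / (n : ℝ) ^ k) * ∑ js : Fin k → Fin n,
          ‖(sagaIter d n γ f' prox x0 (extSeq hn js) k).1 - xstar‖ ^ 2
        ≤ (1 - μ / (2 * (μ * n + L))) ^ k *
            (‖x0 - xstar‖ ^ 2 + ((n : ℝ) / (μ * n + L)) *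
              ((1 / (n : ℝ)) * ∑ i, f i x0
                - ⟪(1 / (n : ℝ)) • ∑ i, f' i xstar, x0 - xstar⟫
                - (1 / (n : ℝ)) * ∑ i, f i xstar))) ∧
    (γ = 1 / (3 * L) →
      (1 / (n : ℝ) ^ k) * ∑ js : Fin k → Fin n,
          ‖(sagaIter d n γ f' prox x0 (extSeq hn js) k).1 - xstar‖ ^ 2
        ≤ (1 - min (1 / (4 * (n : ℝ))) (μ / (3 * L))) ^ k *
            (‖x0 - xstar‖ ^ 2 + (2 * (n : ℝ) / (3 * L)) *
              ((1 / (n : ℝ)) * ∑ i, f i x0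
                - ⟪(1 / (n : ℝ)) • ∑ i, f' i xstar, x0 - xstar⟫
                - (1 / (n : ℝ)) * ∑ i, f i xstar))) := by
  have hL : (0:ℝ) < L := lt_of_lt_of_le hμ hμL
  have hN0 : (0:ℝ) < (n:ℝ) := by exact_mod_cast hn
  have hN' : (n:ℝ) ≠ 0 := ne_of_gt hN0
  have hN1 : (1:ℝ) ≤ (n:ℝ) := by exact_mod_cast hn
  have hmμ : μ ≤ μ*(n:ℝ) := by nlinarith
  have hB0 : (0:ℝ) ≤ (1 / (n : ℝ)) * ∑ i, f i x0
      - ⟪(1 / (n : ℝ)) • ∑ i, f' i xstar, x0 - xstar⟫ - (1 / (n : ℝ)) * ∑ i, f i xstar := by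
    have hBD : (1 / (n : ℝ)) * ∑ i, f i x0
        - ⟪(1 / (n : ℝ)) • ∑ i, f' i xstar, x0 - xstar⟫ - (1 / (n : ℝ)) * ∑ i, f i xstar
        = (1/(n:ℝ)) * (∑ i, (f i x0 - f i xstar - ⟪f' i xstar, x0 - xstar⟫)) := by
      rw [real_inner_smul_left, sum_inner, Finset.sum_sub_distrib, Finset.sum_sub_distrib]
      ring
    rw [hBD]
    apply mul_nonneg (by positivity)
    apply Finset.sum_nonneg
    intro i _
    have h1 := hsc i x0 xstar
    have h2 : (0:ℝ) ≤ μ/2 * ‖x0 - xstar‖^2 := by positivity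
    linarith
  constructor
  · -- Case 1 : γ = 1/(2(μn+L))
    intro hγeq
    subst hγeq
    have hKpos : (0:ℝ) < μ*(n:ℝ)+L := by positivity
    have h2Kμ : (0:ℝ) < 2*(μ*(n:ℝ)+L)-μ := by nlinarith
    have h2Lμ : (0:ℝ) < 2*L-μ := by nlinarith
    have h4m : (0:ℝ) < 4*μ*(n:ℝ)+2*L-μ := by nlinarith
    have hγp : (0:ℝ) < 1/(2*(μ*(n:ℝ)+L)) := by positivity
    have hcp : (0:ℝ) < 2*(μ*(n:ℝ)+L)^2/((2*(μ*(n:ℝ)+L)-μ)*(n:ℝ)) :=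
      div_pos (by positivity) (mul_pos h2Kμ hN0)
    have h1ρ : (0:ℝ) ≤ 1 - μ/(2*(μ*(n:ℝ)+L)) := by
      have : μ/(2*(μ*(n:ℝ)+L)) < 1 := by
        rw [div_lt_one (by positivity)]; nlinarith
      linarith
    refine le_trans (saga_main_core d n k hn μ L (L+μ/2) (1/(2*(μ*(n:ℝ)+L)))
      ((4*μ*(n:ℝ)+2*L-μ)/(2*L-μ)) (2*(μ*(n:ℝ)+L)^2/((2*(μ*(n:ℝ)+L)-μ)*(n:ℝ)))
      (μ/(2*(μ*(n:ℝ)+L))) hμ hμL hγp (div_pos (by nlinarith) h2Lμ) hcp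
      (by linarith) (by linarith) ?_ ?_ ?_ ?_ ?_ ?_
      f f' hgrad hsmooth hsc h hh xstar hstar prox hprox x0) ?_
    · -- γ μ < 1
      rw [div_mul_eq_mul_div, div_lt_one (by positivity)]; nlinarith
    · -- γ L ≤ 1
      rw [div_mul_eq_mul_div, div_le_one (by positivity)]; nlinarith
    · -- condition (a)
      have e1 : 2*(2*(μ*(n:ℝ)+L)^2/((2*(μ*(n:ℝ)+L)-μ)*(n:ℝ)))*(1/(2*(μ*(n:ℝ)+L)))^2*(L+μ/2)
            *(1+1/((4*μ*(n:ℝ)+2*L-μ)/(2*L-μ)))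
          = (1/(n:ℝ))*((2*L+μ)/(4*μ*(n:ℝ)+2*L-μ)) := by
        have h3 : L * 2 - μ + μ * (n:ℝ) * 4 ≠ 0 := by linarith
        field_simp
        ring_nf
        field_simp
        ring
      have e2 : 1/(n:ℝ) - μ/(2*(μ*(n:ℝ)+L)) = (1/(n:ℝ))*((μ*(n:ℝ)+2*L)/(2*(μ*(n:ℝ)+L))) := by
        field_simp
        ring
      rw [e1, e2]
      apply mul_le_mul_of_nonneg_left _ (by positivity)
      rw [div_le_div_iff₀ h4m (by positivity)]
      nlinarith [mul_nonneg (sub_nonneg.mpr hmμ) hL.le,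
        mul_nonneg (sub_nonneg.mpr hmμ) (mul_nonneg hμ.le hN0.le),
        mul_nonneg (mul_nonneg hμ.le hN0.le) hL.le, sq_nonneg (μ*(n:ℝ))]
    · -- condition (b)
      apply le_of_eq
      have h3 : (2*(μ*(n:ℝ)+L)-μ) * (2*(μ*(n:ℝ)+L)-μ)⁻¹ = 1 := mul_inv_cancel₀ h2Kμ.ne'
      field_simp
      linear_combination -h3
    · -- condition (c)
      apply le_of_eq
      ring
    · -- condition (d)
      apply le_of_eq
      field_simp
      ring
    · -- bracket monotonicity
      apply mul_le_mul_of_nonneg_left _ (pow_nonneg h1ρ k)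
      apply add_le_add le_rfl
      apply mul_le_mul_of_nonneg_right _ hB0
      rw [one_div_div, div_le_div_iff₀ (by positivity) hKpos]
      nlinarith [mul_pos hKpos hKpos, mul_pos (mul_pos hμ hN0) hKpos]
  · -- Case 2 : γ = 1/(3L)
    intro hγeq
    subst hγeq
    have h3Lμ : (0:ℝ) < 3*L-μ := by nlinarith
    have h5L4μ : (0:ℝ) < 5*L-4*μ := by nlinarith
    have hγp : (0:ℝ) < 1/(3*L) := by positivity
    have hcp : (0:ℝ) < 9*L^2/(2*(3*L-μ)*(n:ℝ)) :=
      div_pos (by positivity) (by positivity)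
    have hρle : min (1/(4*(n:ℝ))) (μ/(3*L)) ≤ μ/(3*L) := min_le_right _ _
    have h1ρ : (0:ℝ) ≤ 1 - min (1/(4*(n:ℝ))) (μ/(3*L)) := by
      have : μ/(3*L) < 1 := by rw [div_lt_one (by positivity)]; nlinarith
      linarith
    refine le_trans (saga_main_core d n k hn μ L (5*L/4) (1/(3*L))
      (7*L/(5*L-4*μ)) (9*L^2/(2*(3*L-μ)*(n:ℝ)))
      (min (1/(4*(n:ℝ))) (μ/(3*L))) hμ hμL hγp (div_pos (by positivity) h5L4μ) hcp
      (by linarith) (by linarith) ?_ ?_ ?_ ?_ ?_ ?_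
      f f' hgrad hsmooth hsc h hh xstar hstar prox hprox x0) ?_
    · -- γ μ < 1
      rw [div_mul_eq_mul_div, div_lt_one (by positivity)]; nlinarith
    · -- γ L ≤ 1
      rw [div_mul_eq_mul_div, div_le_one (by positivity)]; nlinarith
    · -- condition (a)
      have hρ4 : min (1/(4*(n:ℝ))) (μ/(3*L)) ≤ 1/(4*(n:ℝ)) := min_le_left _ _
      have e1 : 2*(9*L^2/(2*(3*L-μ)*(n:ℝ)))*(1/(3*L))^2*(5*L/4)*(1+1/(7*L/(5*L-4*μ)))
          = (1/(n:ℝ))*((15*L-5*μ)/(7*(3*L-μ))) := by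
        field_simp
        ring
      have key : (1/(n:ℝ))*((15*L-5*μ)/(7*(3*L-μ))) ≤ 1/(n:ℝ) - 1/(4*(n:ℝ)) := by
        have e2 : 1/(n:ℝ) - 1/(4*(n:ℝ)) = (1/(n:ℝ))*(3/4) := by field_simp; ring
        rw [e2]
        apply mul_le_mul_of_nonneg_left _ (by positivity)
        rw [div_le_div_iff₀ (by positivity) (by norm_num)]
        nlinarith
      rw [e1]
      have : 1/(n:ℝ) - 1/(4*(n:ℝ)) ≤ 1/(n:ℝ) - min (1/(4*(n:ℝ))) (μ/(3*L)) := by linarith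
      linarith
    · -- condition (b)
      apply le_of_eq
      have h3 : L*3-μ ≠ 0 := by linarith
      field_simp
      ring
    · -- condition (c)
      refine le_trans hρle (le_of_eq (by ring))
    · -- condition (d)
      apply le_of_eq
      have h3 : L*5-μ*4 ≠ 0 := by linarith
      field_simp
      ring_nf
      field_simp
      ring
    · -- bracket monotonicity
      apply mul_le_mul_of_nonneg_left _ (pow_nonneg h1ρ k)
      apply add_le_add le_rfl
      apply mul_le_mul_of_nonneg_right _ hB0
      rw [one_div_div, div_le_div_iff₀ (by positivity) (by positivity)]
      nlinarith [mul_nonneg (mul_nonneg hμ.le hL.le) hN0.le]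
end

section
/- For a table φ_1, …, φ_n with MISO point w, for each index j let φ^(j) be the table after the MISO update with index j and w^(j) the recomputed MISO point. Then the expected one-step descent in the average Euclidean distance satisfies (1/n)∑_{j=1}^n [(1/n)∑_{i=1}^n ‖w^(j) − φ_i^(j)‖] ≤ (1 − μ/((μ + L)n)) · (1/n)∑_{i=1}^n ‖w − φ_i‖. -/
open scoped RealInnerProductSpace

section aux
set_option linter.unusedSectionVars false
variable {E : Type*} [NormedAddCommGroup E] [InnerProductSpace ℝ E] [CompleteSpace E]

/-- One-sided cocoercivity from convexity + descent, abstract form. -/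
lemma miso_gone {g : E → ℝ} {g' : E → E} {M : ℝ} (hM : 0 < M)
    (hconv : ∀ a b : E, g a + ⟪g' a, b - a⟫ ≤ g b)
    (hdesc : ∀ a b : E, g b ≤ g a + ⟪g' a, b - a⟫ + M / 2 * ‖b - a‖ ^ 2) (a b : E) :
    g a + ⟪g' a, b - a⟫ + 1 / (2 * M) * ‖g' b - g' a‖ ^ 2 ≤ g b := by
  set D := g' b - g' a with hD
  set u := b - (1 / M) • D with hu
  have h1 := hconv a u
  have h2 := hdesc b u
  have e1 : u - b = -((1 / M) • D) := by rw [hu]; abel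
  have e2 : ⟪g' b, u - b⟫ = -(1 / M) * ⟪g' b, D⟫ := by
    rw [e1, inner_neg_right, inner_smul_right]; ring
  have e3 : ‖u - b‖ ^ 2 = (1 / M) ^ 2 * ‖D‖ ^ 2 := by
    rw [e1, norm_neg, norm_smul, Real.norm_eq_abs, mul_pow, sq_abs]
  have e4 : ⟪g' a, u - a⟫ = ⟪g' a, b - a⟫ - (1 / M) * ⟪g' a, D⟫ := by
    have h : u - a = (b - a) - (1 / M) • D := by rw [hu]; abel
    rw [h, inner_sub_right, inner_smul_right]
  have e5 : ⟪g' b, D⟫ - ⟪g' a, D⟫ = ‖D‖ ^ 2 := by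
    rw [← inner_sub_left, ← hD, real_inner_self_eq_norm_sq]
  rw [e2, e3] at h2
  rw [e4] at h1
  have he5' : 1/M * ⟪g' b, D⟫ - 1/M * ⟪g' a, D⟫ = 1/M * ‖D‖ ^ 2 := by
    rw [← mul_sub, e5]
  have hq1 : M/2 * ((1/M)^2 * ‖D‖^2) = 1/2 * (1/M * ‖D‖^2) := by field_simp
  have hq2 : 1/(2*M) * ‖D‖^2 = 1/2 * (1/M * ‖D‖^2) := by field_simp
  linarith [h1, h2, he5', hq1, hq2]

lemma miso_alg {μ L p q r : ℝ} (hμ : 0 < μ) (hμL : μ ≤ L) (hq : 0 ≤ q) (hr : 0 ≤ r)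
    (hco : μ * L * r + q ≤ (μ + L) * p) :
    r - 2 * (1/L) * p + (1/L)^2 * q ≤ (L / (μ + L))^2 * r := by
  have hL : 0 < L := lt_of_lt_of_le hμ hμL
  have hs : 0 < μ + L := by linarith
  have h1 : 2*L*(μ+L) * (μ*L*r + q) ≤ 2*L*(μ+L) * ((μ+L)*p) :=
    mul_le_mul_of_nonneg_left hco (by positivity)
  have h2 : 0 ≤ ((μ+L)*(L-μ)) * q := mul_nonneg (by nlinarith) hq
  have h3 : 0 ≤ (μ^2*L^2) * r := by positivity
  have hpoly : (L^2*r - 2*L*p + q) * (μ+L)^2 ≤ L^2*r * L^2 := by nlinarith [h1, h2, h3]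
  have e1 : r - 2 * (1/L) * p + (1/L)^2 * q = (L^2*r - 2*L*p + q) / L^2 := by
    field_simp
  have e2 : (L / (μ + L))^2 * r = (L^2*r) / ((μ+L)^2) := by
    rw [div_pow]; ring
  rw [e1, e2, div_le_div_iff₀ (by positivity) (by positivity)]
  exact hpoly

lemma miso_div {M a b : ℝ} (hM : 0 < M) (h : 1/M * b ≤ a) : b ≤ M * a := by
  have h2 := mul_le_mul_of_nonneg_left h hM.le
  calc b = M * (1/M * b) := by field_simp
  _ ≤ M * a := h2

/-- Descent lemma. -/
lemma miso_descent {f : E → ℝ} {f' : E → E} {L : ℝ} (hL : 0 ≤ L)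
    (hgrad : ∀ x, HasGradientAt f (f' x) x)
    (hsmooth : ∀ x y, ‖f' x - f' y‖ ≤ L * ‖x - y‖) (x y : E) :
    f y ≤ f x + ⟪f' x, y - x⟫ + L / 2 * ‖y - x‖ ^ 2 := by
  set v := y - x with hv
  have hline : ∀ t : ℝ, HasDerivAt (fun t : ℝ => f (x + t • v)) ⟪f' (x + t • v), v⟫ t := by
    intro t
    have h1 : HasDerivAt (fun t : ℝ => x + t • v) v t := by
      simpa using ((hasDerivAt_id t).smul_const v).const_add x
    have h2 : HasFDerivAt f (InnerProductSpace.toDual ℝ E (f' (x + t • v))) (x + t • v) :=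
      (hgrad (x + t • v))
    have h3 := h2.comp_hasDerivAt t h1
    exact h3
  have hcontf' : Continuous f' := by
    have : LipschitzWith (Real.toNNReal L) f' := by
      apply LipschitzWith.of_dist_le_mul
      intro a b
      rw [dist_eq_norm, dist_eq_norm, Real.coe_toNNReal L hL]
      exact hsmooth a b
    exact this.continuous
  have hcontg : Continuous fun t : ℝ => ⟪f' (x + t • v), v⟫ := by
    apply Continuous.inner
    · exact hcontf'.comp (by continuity)
    · exact continuous_const
  have hint : IntervalIntegrable (fun t : ℝ => ⟪f' (x + t • v), v⟫) MeasureTheory.volume 0 1 :=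
    hcontg.intervalIntegrable 0 1
  have hftc : ∫ t in (0:ℝ)..1, ⟪f' (x + t • v), v⟫ = f (x + (1:ℝ) • v) - f (x + (0:ℝ) • v) :=
    intervalIntegral.integral_eq_sub_of_hasDerivAt (fun t _ => hline t) hint
  have hxy : f y - f x = ∫ t in (0:ℝ)..1, ⟪f' (x + t • v), v⟫ := by
    rw [hftc]; simp [hv]
  have hmono : ∫ t in (0:ℝ)..1, ⟪f' (x + t • v), v⟫
      ≤ ∫ t in (0:ℝ)..1, (⟪f' x, v⟫ + L * ‖v‖ ^ 2 * t) := by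
    apply intervalIntegral.integral_mono_on (by norm_num) hint
    · exact (Continuous.intervalIntegrable (by continuity) 0 1)
    · intro t ht
      rcases ht with ⟨ht0, _⟩
      have h1 : ⟪f' (x + t • v), v⟫ - ⟪f' x, v⟫ = ⟪f' (x + t • v) - f' x, v⟫ := by
        rw [inner_sub_left]
      have h2 : ⟪f' (x + t • v) - f' x, v⟫ ≤ ‖f' (x + t • v) - f' x‖ * ‖v‖ :=
        real_inner_le_norm _ _
      have h3 : ‖f' (x + t • v) - f' x‖ ≤ L * (t * ‖v‖) := by
        have := hsmooth (x + t • v) x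
        simpa [norm_smul, abs_of_nonneg ht0] using this
      have h4 : ‖f' (x + t • v) - f' x‖ * ‖v‖ ≤ L * (t * ‖v‖) * ‖v‖ :=
        mul_le_mul_of_nonneg_right h3 (norm_nonneg v)
      nlinarith [norm_nonneg v]
  have hval : ∫ t in (0:ℝ)..1, (⟪f' x, v⟫ + L * ‖v‖ ^ 2 * t) = ⟪f' x, v⟫ + L / 2 * ‖v‖ ^ 2 := by
    rw [intervalIntegral.integral_add intervalIntegrable_const
      (Continuous.intervalIntegrable (by continuity) 0 1)]
    rw [intervalIntegral.integral_const_mul, integral_id]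
    simp; ring
  linarith [hxy, hmono, hval.le, hval.ge]

/-- Key contraction estimate for the gradient step of a strongly convex smooth function. -/
lemma miso_key {f : E → ℝ} {f' : E → E} {μ L : ℝ} (hμ : 0 < μ) (hμL : μ ≤ L)
    (hgrad : ∀ x, HasGradientAt f (f' x) x)
    (hsmooth : ∀ x y, ‖f' x - f' y‖ ≤ L * ‖x - y‖)
    (hsc : ∀ x y, f x ≥ f y + ⟪f' y, x - y⟫ + μ / 2 * ‖x - y‖ ^ 2) (x y : E) :
    ‖(x - y) - (1 / L) • (f' x - f' y)‖ ≤ L / (μ + L) * ‖x - y‖ := by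
  have hL : 0 < L := lt_of_lt_of_le hμ hμL
  have hdesc := miso_descent hL.le hgrad hsmooth
  -- strong convexity pair sum
  have e3 : ⟪f' x - f' y, x - y⟫ = ⟪f' x, x - y⟫ - ⟪f' y, x - y⟫ := inner_sub_left _ _ _
  have enn : ‖y - x‖ = ‖x - y‖ := norm_sub_rev y x
  have eswap : ⟪f' x, y - x⟫ = - ⟪f' x, x - y⟫ := by
    rw [show y - x = -(x - y) by abel, inner_neg_right]
  have hpair : ⟪f' x - f' y, x - y⟫ ≥ μ * ‖x - y‖ ^ 2 := by
    have h1 := hsc x y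
    have h2 := hsc y x
    rw [eswap, enn] at h2
    linarith [e3]
  -- cocoercivity
  have hco : (μ + L) * ⟪f' x - f' y, x - y⟫
      ≥ μ * L * ‖x - y‖ ^ 2 + ‖f' x - f' y‖ ^ 2 := by
    rcases eq_or_lt_of_le hμL with hEq | hlt
    · have hs := hsmooth x y
      have hq : ‖f' x - f' y‖ ^ 2 ≤ L ^ 2 * ‖x - y‖ ^ 2 := by
        nlinarith [norm_nonneg (f' x - f' y), norm_nonneg (x - y)]
      subst hEq
      nlinarith [hpair]
    · set M := L - μ with hM
      have hM0 : 0 < M := by simp only [hM]; linarith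
      have key_id : ∀ a b : E, (f b - μ/2 * ‖b‖^2) - (f a - μ/2 * ‖a‖^2)
          - ⟪f' a - μ • a, b - a⟫
          = f b - f a - ⟪f' a, b - a⟫ - μ / 2 * ‖b - a‖ ^ 2 := by
        intro a b
        have hil : ⟪f' a - μ • a, b - a⟫ = ⟪f' a, b - a⟫ - μ * ⟪a, b - a⟫ := by
          rw [inner_sub_left, inner_smul_left]; simp
        have hid : ‖b - a‖ ^ 2 = ‖b‖ ^ 2 - 2 * ⟪a, b⟫ + ‖a‖ ^ 2 := by
          rw [norm_sub_sq_real, real_inner_comm]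
        have hin : ⟪a, b - a⟫ = ⟪a, b⟫ - ‖a‖ ^ 2 := by
          rw [inner_sub_right, real_inner_self_eq_norm_sq]
        rw [hil, hid, hin]; ring
      have hgconv : ∀ a b : E, (f a - μ/2 * ‖a‖^2) + ⟪f' a - μ • a, b - a⟫
          ≤ (f b - μ/2 * ‖b‖^2) := by
        intro a b
        have h1 := hsc b a
        have h2 := key_id a b
        linarith
      have hgdesc : ∀ a b : E, (f b - μ/2 * ‖b‖^2) ≤ (f a - μ/2 * ‖a‖^2)
          + ⟪f' a - μ • a, b - a⟫ + M / 2 * ‖b - a‖ ^ 2 := by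
        intro a b
        have h1 := hdesc a b
        have h2 := key_id a b
        simp only [hM]
        linarith
      have hgone := miso_gone (g := fun v => f v - μ/2 * ‖v‖^2)
        (g' := fun v => f' v - μ • v) hM0 hgconv hgdesc
      have h1 : (f x - μ/2 * ‖x‖^2) + ⟪f' x - μ • x, y - x⟫
          + 1 / (2*M) * ‖(f' y - μ • y) - (f' x - μ • x)‖ ^ 2 ≤ (f y - μ/2 * ‖y‖^2) :=
        hgone x y
      have h2 : (f y - μ/2 * ‖y‖^2) + ⟪f' y - μ • y, x - y⟫
          + 1 / (2*M) * ‖(f' x - μ • x) - (f' y - μ • y)‖ ^ 2 ≤ (f x - μ/2 * ‖x‖^2) :=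
        hgone y x
      have egg : (f' x - μ • x) - (f' y - μ • y) = (f' x - f' y) - μ • (x - y) := by
        rw [smul_sub]; abel
      have egg' : (f' y - μ • y) - (f' x - μ • x) = -((f' x - μ • x) - (f' y - μ • y)) := by
        abel
      rw [egg', norm_neg, egg] at h1
      rw [egg] at h2
      have eswap2 : ⟪f' x - μ • x, y - x⟫ = - ⟪f' x - μ • x, x - y⟫ := by
        rw [show y - x = -(x - y) by abel, inner_neg_right]
      rw [eswap2] at h1
      have esum : ⟪f' x - μ • x, x - y⟫ - ⟪f' y - μ • y, x - y⟫
          = ⟪(f' x - f' y) - μ • (x - y), x - y⟫ := by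
        rw [← inner_sub_left, egg]
      have hsum : ⟪(f' x - f' y) - μ • (x - y), x - y⟫
          ≥ (1 / M) * ‖(f' x - f' y) - μ • (x - y)‖ ^ 2 := by
        rw [← esum]
        have : 1 / (2 * M) * ‖(f' x - f' y) - μ • (x - y)‖ ^ 2
            + 1 / (2 * M) * ‖(f' x - f' y) - μ • (x - y)‖ ^ 2
            = (1 / M) * ‖(f' x - f' y) - μ • (x - y)‖ ^ 2 := by
          field_simp; ring
        linarith
      have einner : ⟪(f' x - f' y) - μ • (x - y), x - y⟫
          = ⟪f' x - f' y, x - y⟫ - μ * ‖x - y‖ ^ 2 := by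
        rw [inner_sub_left, inner_smul_left, real_inner_self_eq_norm_sq]; simp
      have enorm : ‖(f' x - f' y) - μ • (x - y)‖ ^ 2
          = ‖f' x - f' y‖ ^ 2 - 2 * μ * ⟪f' x - f' y, x - y⟫ + μ ^ 2 * ‖x - y‖ ^ 2 := by
        rw [norm_sub_sq_real, inner_smul_right, norm_smul, Real.norm_eq_abs, mul_pow, sq_abs]
        ring
      rw [einner, enorm] at hsum
      have hMsum : M * (⟪f' x - f' y, x - y⟫ - μ * ‖x - y‖ ^ 2)
          ≥ ‖f' x - f' y‖ ^ 2 - 2 * μ * ⟪f' x - f' y, x - y⟫ + μ ^ 2 * ‖x - y‖ ^ 2 := by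
        exact miso_div hM0 hsum.le
      simp only [hM] at hMsum
      nlinarith [hMsum]
  -- conclude
  have hq0 : (0:ℝ) ≤ ‖f' x - f' y‖ ^ 2 := by positivity
  have hr0 : (0:ℝ) ≤ ‖x - y‖ ^ 2 := by positivity
  have hμL0 : 0 < μ + L := by linarith
  have hsq : ‖(x - y) - (1 / L) • (f' x - f' y)‖ ^ 2 ≤ (L / (μ + L) * ‖x - y‖) ^ 2 := by
    have expand : ‖(x - y) - (1 / L) • (f' x - f' y)‖ ^ 2
        = ‖x - y‖ ^ 2 - 2 * (1 / L) * ⟪f' x - f' y, x - y⟫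
          + (1 / L) ^ 2 * ‖f' x - f' y‖ ^ 2 := by
      rw [norm_sub_sq_real, inner_smul_right, norm_smul, Real.norm_eq_abs, mul_pow, sq_abs,
        real_inner_comm]
      ring
    rw [expand, mul_pow]
    exact miso_alg hμ hμL hq0 hr0 hco.le
  calc ‖(x - y) - (1 / L) • (f' x - f' y)‖
      = Real.sqrt (‖(x - y) - (1 / L) • (f' x - f' y)‖ ^ 2) := by
        rw [Real.sqrt_sq (norm_nonneg _)]
    _ ≤ Real.sqrt ((L / (μ + L) * ‖x - y‖) ^ 2) := Real.sqrt_le_sqrt hsq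
    _ = L / (μ + L) * ‖x - y‖ := by rw [Real.sqrt_sq (by positivity)]

/-- The MISO point associated with a table `φ`. -/
noncomputable def misoW (d n : ℕ) (L : ℝ)
    (f' : Fin n → EuclideanSpace ℝ (Fin d) → EuclideanSpace ℝ (Fin d))
    (φ : Fin n → EuclideanSpace ℝ (Fin d)) : EuclideanSpace ℝ (Fin d) :=
  (1 / (n : ℝ)) • ∑ i, φ i - (1 / (L * n)) • ∑ i, f' i (φ i)

theorem miso_expected_one_step_descent (d n : ℕ) (hn : 1 ≤ n) (μ L : ℝ)
    (hμ : 0 < μ) (hμL : μ ≤ L)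
    (f : Fin n → EuclideanSpace ℝ (Fin d) → ℝ)
    (f' : Fin n → EuclideanSpace ℝ (Fin d) → EuclideanSpace ℝ (Fin d))
    (hgrad : ∀ i x, HasGradientAt (f i) (f' i x) x)
    (hsmooth : ∀ i x y, ‖f' i x - f' i y‖ ≤ L * ‖x - y‖)
    (hsc : ∀ i x y, f i x ≥ f i y + ⟪f' i y, x - y⟫ + μ / 2 * ‖x - y‖ ^ 2)
    (φ : Fin n → EuclideanSpace ℝ (Fin d)) :
    (1 / (n : ℝ)) * ∑ j, ((1 / (n : ℝ)) * ∑ i,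
        ‖misoW d n L f' (Function.update φ j (misoW d n L f' φ))
          - Function.update φ j (misoW d n L f' φ) i‖)
      ≤ (1 - μ / ((μ + L) * n)) * ((1 / (n : ℝ)) * ∑ i, ‖misoW d n L f' φ - φ i‖) := by
  have hL : 0 < L := lt_of_lt_of_le hμ hμL
  have hn0 : (0:ℝ) < (n:ℝ) := by exact_mod_cast Nat.pos_of_ne_zero (by omega)
  have hμL0 : (0:ℝ) < μ + L := by linarith
  set S : ℝ := ∑ i, ‖misoW d n L f' φ - φ i‖ with hS
  have hS0 : 0 ≤ S := Finset.sum_nonneg fun i _ => norm_nonneg _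
  -- the per-j bound on the inner sum
  have hinner : ∀ j : Fin n,
      ∑ i, ‖misoW d n L f' (Function.update φ j (misoW d n L f' φ))
          - Function.update φ j (misoW d n L f' φ) i‖
        ≤ S - μ / (μ + L) * ‖misoW d n L f' φ - φ j‖ := by
    intro j
    -- difference identity
    have sum1 : ∑ i, Function.update φ j (misoW d n L f' φ) i
        = misoW d n L f' φ + (∑ i, φ i - φ j) := by
      rw [Finset.sum_update_of_mem (Finset.mem_univ j)]
      rw [Finset.sum_sdiff_eq_sub (Finset.singleton_subset_iff.2 (Finset.mem_univ j))]
      rw [Finset.sum_singleton]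
    have hfun : (fun i => f' i (Function.update φ j (misoW d n L f' φ) i))
        = Function.update (fun i => f' i (φ i)) j (f' j (misoW d n L f' φ)) := by
      funext i
      by_cases h : i = j
      · subst h; simp
      · simp [Function.update_of_ne h]
    have sum2 : ∑ i, f' i (Function.update φ j (misoW d n L f' φ) i)
        = f' j (misoW d n L f' φ) + (∑ i, f' i (φ i) - f' j (φ j)) := by
      calc ∑ i, f' i (Function.update φ j (misoW d n L f' φ) i)
          = ∑ i, Function.update (fun i => f' i (φ i)) j (f' j (misoW d n L f' φ)) i := by
            rw [hfun]
        _ = _ := by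
            rw [Finset.sum_update_of_mem (Finset.mem_univ j)]
            rw [Finset.sum_sdiff_eq_sub (Finset.singleton_subset_iff.2 (Finset.mem_univ j))]
            rw [Finset.sum_singleton]
    have hdiff : misoW d n L f' (Function.update φ j (misoW d n L f' φ)) - misoW d n L f' φ
        = (1 / (n : ℝ)) • ((misoW d n L f' φ - φ j)
          - (1 / L) • (f' j (misoW d n L f' φ) - f' j (φ j))) := by
      conv_lhs => rw [show misoW d n L f' (Function.update φ j (misoW d n L f' φ))
        = (1 / (n : ℝ)) • ∑ i, Function.update φ j (misoW d n L f' φ) i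
          - (1 / (L * n)) • ∑ i, f' i (Function.update φ j (misoW d n L f' φ) i) from rfl]
      rw [sum1, sum2]
      rw [show misoW d n L f' φ
        = (1 / (n : ℝ)) • ∑ i, φ i - (1 / (L * n)) • ∑ i, f' i (φ i) from rfl]
      have hb : (1 / (L * (n:ℝ))) = (1 / (n:ℝ)) * (1 / L) := by
        rw [div_mul_div_comm, one_mul, mul_comm]
      rw [hb]
      module
    -- norm bound on the step
    have hwj : ‖misoW d n L f' (Function.update φ j (misoW d n L f' φ)) - misoW d n L f' φ‖
        ≤ (1 / (n:ℝ)) * (L / (μ + L) * ‖misoW d n L f' φ - φ j‖) := by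
      rw [hdiff, norm_smul, Real.norm_eq_abs, abs_of_pos (by positivity)]
      exact mul_le_mul_of_nonneg_left
        (miso_key hμ hμL (hgrad j) (hsmooth j) (hsc j) (misoW d n L f' φ) (φ j))
        (by positivity)
    -- termwise triangle bound
    have hterm : ∀ i : Fin n,
        ‖misoW d n L f' (Function.update φ j (misoW d n L f' φ))
          - Function.update φ j (misoW d n L f' φ) i‖
        ≤ ‖misoW d n L f' (Function.update φ j (misoW d n L f' φ)) - misoW d n L f' φ‖
          + ‖misoW d n L f' φ - φ i‖
          - (if i = j then ‖misoW d n L f' φ - φ j‖ else 0) := by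
      intro i
      by_cases h : i = j
      · subst h
        rw [Function.update_self, if_pos rfl]
        have := norm_nonneg (misoW d n L f' φ - φ i)
        linarith
      · simp only [if_neg h, Function.update_of_ne h, sub_zero]
        calc ‖misoW d n L f' (Function.update φ j (misoW d n L f' φ)) - φ i‖
            = ‖(misoW d n L f' (Function.update φ j (misoW d n L f' φ)) - misoW d n L f' φ)
              + (misoW d n L f' φ - φ i)‖ := by congr 1; abel
          _ ≤ _ := norm_add_le _ _
    calc ∑ i, ‖misoW d n L f' (Function.update φ j (misoW d n L f' φ))
          - Function.update φ j (misoW d n L f' φ) i‖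
        ≤ ∑ i : Fin n,
          (‖misoW d n L f' (Function.update φ j (misoW d n L f' φ)) - misoW d n L f' φ‖
          + ‖misoW d n L f' φ - φ i‖
          - (if i = j then ‖misoW d n L f' φ - φ j‖ else 0)) :=
          Finset.sum_le_sum fun i _ => hterm i
      _ = (n:ℝ) * ‖misoW d n L f' (Function.update φ j (misoW d n L f' φ)) - misoW d n L f' φ‖
          + S - ‖misoW d n L f' φ - φ j‖ := by
          rw [Finset.sum_sub_distrib, Finset.sum_add_distrib, Finset.sum_const,
            Finset.card_univ, Fintype.card_fin, Finset.sum_ite_eq' Finset.univ j]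
          simp [hS, nsmul_eq_mul]
      _ ≤ (n:ℝ) * ((1 / (n:ℝ)) * (L / (μ + L) * ‖misoW d n L f' φ - φ j‖))
          + S - ‖misoW d n L f' φ - φ j‖ := by
          have := mul_le_mul_of_nonneg_left hwj hn0.le
          linarith
      _ = S - μ / (μ + L) * ‖misoW d n L f' φ - φ j‖ := by
          have hne : (n:ℝ) ≠ 0 := hn0.ne'
          have hne2 : (μ + L) ≠ 0 := hμL0.ne'
          field_simp
          ring
  -- outer sum
  have houter : (1 / (n : ℝ)) * ∑ j, ((1 / (n : ℝ)) * ∑ i,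
        ‖misoW d n L f' (Function.update φ j (misoW d n L f' φ))
          - Function.update φ j (misoW d n L f' φ) i‖)
      ≤ (1 / (n : ℝ)) * ∑ j : Fin n,
          ((1 / (n : ℝ)) * (S - μ / (μ + L) * ‖misoW d n L f' φ - φ j‖)) := by
    apply mul_le_mul_of_nonneg_left _ (by positivity)
    apply Finset.sum_le_sum
    intro j _
    exact mul_le_mul_of_nonneg_left (hinner j) (by positivity)
  refine le_trans houter (le_of_eq ?_)
  have hsumS : ∑ j : Fin n, ((1 / (n : ℝ)) * (S - μ / (μ + L) * ‖misoW d n L f' φ - φ j‖))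
      = (1 / (n : ℝ)) * ((n:ℝ) * S - μ / (μ + L) * S) := by
    rw [← Finset.mul_sum]
    congr 1
    rw [Finset.sum_sub_distrib, Finset.sum_const, ← Finset.mul_sum, ← hS,
      Finset.card_univ, Fintype.card_fin, nsmul_eq_mul]
  rw [hsumS]
  have hne : (n:ℝ) ≠ 0 := hn0.ne'
  have hne2 : (μ + L) ≠ 0 := hμL0.ne'
  field_simp
end aux
end

section
/- Let f : ℝ^d → ℝ be differentiable, L-smooth and μ-strongly convex with 0 < μ < L. Then for all x, y ∈ ℝ^d: f(x) ≥ f(y) + ⟨∇f(y), x − y⟩ + (1/(2(L − μ)))‖∇f(x) − ∇f(y)‖² + (μL/(2(L − μ)))‖x − y‖² + (μ/(L − μ))⟨∇f(x) − ∇f(y), y − x⟩. -/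
open scoped RealInnerProductSpace

-- descent lemma
theorem descent_lemma_s19 (d : ℕ) (C : ℝ) (hC : 0 ≤ C)
    (f : EuclideanSpace ℝ (Fin d) → ℝ)
    (f' : EuclideanSpace ℝ (Fin d) → EuclideanSpace ℝ (Fin d))
    (hgrad : ∀ x, HasGradientAt f (f' x) x)
    (hlip : ∀ a b, ‖f' a - f' b‖ ≤ C * ‖a - b‖)
    (x y : EuclideanSpace ℝ (Fin d)) :
    f x ≤ f y + ⟪f' y, x - y⟫ + C / 2 * ‖x - y‖ ^ 2 := by
  set v := x - y with hv
  have hf'cont : Continuous f' := by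
    have : LipschitzWith C.toNNReal f' := by
      apply LipschitzWith.of_dist_le_mul
      intro a b
      rw [dist_eq_norm, dist_eq_norm]
      calc ‖f' a - f' b‖ ≤ C * ‖a - b‖ := hlip a b
        _ ≤ C.toNNReal * ‖a - b‖ := by
            gcongr; exact Real.le_coe_toNNReal C
    exact this.continuous
  have hderiv : ∀ t : ℝ, HasDerivAt (fun s : ℝ => f (y + s • v))
      ⟪f' (y + t • v), v⟫ t := by
    intro t
    have h1 : HasDerivAt (fun s : ℝ => y + s • v) v t := by
      simpa using ((hasDerivAt_id t).smul_const v).const_add y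
    have h2 := (hgrad (y + t • v)).hasFDerivAt.comp_hasDerivAt t h1
    simp at h2
    exact h2
  have hcont : Continuous fun t : ℝ => ⟪f' (y + t • v), v⟫ := by
    exact (hf'cont.comp (by continuity)).inner continuous_const
  have hint : f (y + (1:ℝ) • v) - f (y + (0:ℝ) • v)
      = ∫ t in (0:ℝ)..1, ⟪f' (y + t • v), v⟫ := by
    rw [← intervalIntegral.integral_eq_sub_of_hasDerivAt (fun t _ => hderiv t)
      (hcont.intervalIntegrable 0 1)]
  simp only [one_smul, zero_smul, add_zero] at hint
  have hxy : y + v = x := by rw [hv]; abel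
  rw [hxy] at hint
  have hcont2 : Continuous fun t : ℝ => ⟪f' y, v⟫ + C * t * ‖v‖ ^ 2 := by fun_prop
  have hcont3 : Continuous fun t : ℝ => C * t * ‖v‖ ^ 2 := by fun_prop
  have hbound : ∫ t in (0:ℝ)..1, ⟪f' (y + t • v), v⟫
      ≤ ∫ t in (0:ℝ)..1, (⟪f' y, v⟫ + C * t * ‖v‖ ^ 2) := by
    apply intervalIntegral.integral_mono_on (by norm_num)
      (hcont.intervalIntegrable 0 1) (hcont2.intervalIntegrable 0 1)
    intro t ht
    obtain ⟨ht0, ht1⟩ := ht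
    have h1 : ⟪f' (y + t • v) - f' y, v⟫ ≤ ‖f' (y + t • v) - f' y‖ * ‖v‖ :=
      real_inner_le_norm _ _
    have h2 : ‖f' (y + t • v) - f' y‖ ≤ C * (t * ‖v‖) := by
      have := hlip (y + t • v) y
      simpa [norm_smul, abs_of_nonneg ht0] using this
    have h3 : ⟪f' (y + t • v), v⟫ = ⟪f' y, v⟫ + ⟪f' (y + t • v) - f' y, v⟫ := by
      rw [inner_sub_left]; ring
    have hvnn : (0:ℝ) ≤ ‖v‖ := norm_nonneg _
    nlinarith [mul_le_mul_of_nonneg_right h2 hvnn]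
  have hval : ∫ t in (0:ℝ)..1, (⟪f' y, v⟫ + C * t * ‖v‖ ^ 2)
      = ⟪f' y, v⟫ + C / 2 * ‖v‖ ^ 2 := by
    rw [intervalIntegral.integral_add (intervalIntegrable_const)
      (hcont3.intervalIntegrable 0 1)]
    simp only [intervalIntegral.integral_const, smul_eq_mul]
    have : ∫ t in (0:ℝ)..1, C * t * ‖v‖ ^ 2 = C / 2 * ‖v‖ ^ 2 := by
      have : (fun t : ℝ => C * t * ‖v‖ ^ 2) = fun t : ℝ => (C * ‖v‖ ^ 2) * t := by
        funext t; ring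
      rw [this, intervalIntegral.integral_const_mul, integral_id]
      ring
    rw [this]; ring
  linarith [hint ▸ (hbound.trans_eq hval)]

-- cocoercivity-type lower bound: purely algebraic
theorem lower_bound_lemma (d : ℕ) (C : ℝ) (hC : 0 < C)
    (g : EuclideanSpace ℝ (Fin d) → ℝ)
    (g' : EuclideanSpace ℝ (Fin d) → EuclideanSpace ℝ (Fin d))
    (hconv : ∀ a b, g a ≥ g b + ⟪g' b, a - b⟫)
    (hdesc : ∀ a b, g a ≤ g b + ⟪g' b, a - b⟫ + C / 2 * ‖a - b‖ ^ 2)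
    (x y : EuclideanSpace ℝ (Fin d)) :
    g x ≥ g y + ⟪g' y, x - y⟫ + 1 / (2 * C) * ‖g' x - g' y‖ ^ 2 := by
  set w := g' x - g' y with hw
  set z := x - C⁻¹ • w with hz
  have h1 := hconv z y
  have h2 := hdesc z x
  have hzx : z - x = -(C⁻¹ • w) := by rw [hz]; abel
  have e1 : ⟪g' y, z - y⟫ = ⟪g' y, x - y⟫ - C⁻¹ * ⟪g' y, w⟫ := by
    have : z - y = (x - y) - C⁻¹ • w := by rw [hz]; abel
    rw [this, inner_sub_right, real_inner_smul_right]
  have e2 : ⟪g' x, z - x⟫ = -(C⁻¹ * ⟪g' x, w⟫) := by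
    rw [hzx, inner_neg_right, real_inner_smul_right]
  have e3 : ‖z - x‖ ^ 2 = C⁻¹ ^ 2 * ‖w‖ ^ 2 := by
    rw [hzx, norm_neg, norm_smul]
    simp [abs_of_nonneg (inv_nonneg.2 hC.le), mul_pow]
  have e4 : ⟪g' x, w⟫ - ⟪g' y, w⟫ = ‖w‖ ^ 2 := by
    rw [← inner_sub_left, ← hw, real_inner_self_eq_norm_sq]
  rw [e1] at h1
  rw [e2, e3] at h2
  have hC' : C ≠ 0 := hC.ne'
  have key : C / 2 * (C⁻¹ ^ 2 * ‖w‖ ^ 2) = 1 / (2 * C) * ‖w‖ ^ 2 := by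
    field_simp
  have e5 : C⁻¹ * ⟪g' x, w⟫ - C⁻¹ * ⟪g' y, w⟫ = C⁻¹ * ‖w‖ ^ 2 := by
    rw [← mul_sub, e4]
  have e6 : C⁻¹ * ‖w‖ ^ 2 - 1 / (2 * C) * ‖w‖ ^ 2 = 1 / (2 * C) * ‖w‖ ^ 2 := by
    field_simp; ring
  linarith

theorem full_strong_lower_bound (d : ℕ) (μ L : ℝ) (hμ : 0 < μ) (hμL : μ < L)
    (f : EuclideanSpace ℝ (Fin d) → ℝ)
    (f' : EuclideanSpace ℝ (Fin d) → EuclideanSpace ℝ (Fin d))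
    (hgrad : ∀ x, HasGradientAt f (f' x) x)
    (hsmooth : ∀ x y, ‖f' x - f' y‖ ≤ L * ‖x - y‖)
    (hsc : ∀ x y, f x ≥ f y + ⟪f' y, x - y⟫ + μ / 2 * ‖x - y‖ ^ 2)
    (x y : EuclideanSpace ℝ (Fin d)) :
    f x ≥ f y + ⟪f' y, x - y⟫
      + (1 / (2 * (L - μ))) * ‖f' x - f' y‖ ^ 2
      + (μ * L / (2 * (L - μ))) * ‖x - y‖ ^ 2
      + (μ / (L - μ)) * ⟪f' x - f' y, y - x⟫ := by
  have hK : (0:ℝ) < L - μ := by linarith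
  have hL0 : (0:ℝ) ≤ L := by linarith
  have hsq : ∀ a b : EuclideanSpace ℝ (Fin d),
      ‖a - b‖ ^ 2 = ‖a‖ ^ 2 - 2 * ⟪a, b⟫ + ‖b‖ ^ 2 := fun a b => norm_sub_sq_real a b
  -- inner product expansion helper
  have hib : ∀ a b : EuclideanSpace ℝ (Fin d),
      ⟪f' b - μ • b, a - b⟫ = ⟪f' b, a - b⟫ - μ * (⟪a, b⟫ - ‖b‖ ^ 2) := by
    intro a b
    have h2 : ⟪b, a - b⟫ = ⟪a, b⟫ - ‖b‖ ^ 2 := by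
      rw [inner_sub_right, real_inner_self_eq_norm_sq, real_inner_comm]
    rw [inner_sub_left, real_inner_smul_left, h2]
  have hconv : ∀ a b : EuclideanSpace ℝ (Fin d),
      (fun z => f z - μ / 2 * ‖z‖ ^ 2) a ≥ (fun z => f z - μ / 2 * ‖z‖ ^ 2) b
        + ⟪(fun z => f' z - μ • z) b, a - b⟫ := by
    intro a b
    have h := hsc a b
    have e3 : μ * ‖a - b‖ ^ 2 = μ * (‖a‖ ^ 2 - 2 * ⟪a, b⟫ + ‖b‖ ^ 2) := by rw [hsq a b]
    simp only
    rw [hib a b]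
    linarith
  have hdesc : ∀ a b : EuclideanSpace ℝ (Fin d),
      (fun z => f z - μ / 2 * ‖z‖ ^ 2) a ≤ (fun z => f z - μ / 2 * ‖z‖ ^ 2) b
        + ⟪(fun z => f' z - μ • z) b, a - b⟫ + (L - μ) / 2 * ‖a - b‖ ^ 2 := by
    intro a b
    have h := descent_lemma_s19 d L hL0 f f' hgrad hsmooth a b
    have e3 : μ * ‖a - b‖ ^ 2 = μ * (‖a‖ ^ 2 - 2 * ⟪a, b⟫ + ‖b‖ ^ 2) := by rw [hsq a b]
    simp only
    rw [hib a b]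
    linarith
  have main := lower_bound_lemma d (L - μ) hK (fun z => f z - μ / 2 * ‖z‖ ^ 2)
    (fun z => f' z - μ • z) hconv hdesc x y
  -- norm identity
  have hdiff : (f' x - μ • x) - (f' y - μ • y) = (f' x - f' y) - μ • (x - y) := by
    rw [smul_sub]; abel
  have hnorm : ‖(f' x - μ • x) - (f' y - μ • y)‖ ^ 2
      = ‖f' x - f' y‖ ^ 2 - 2 * (μ * ⟪f' x - f' y, x - y⟫) + μ ^ 2 * ‖x - y‖ ^ 2 := by
    rw [hdiff, hsq, real_inner_smul_right, norm_smul, Real.norm_eq_abs, mul_pow, sq_abs]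
  rw [hnorm, hib x y] at main
  have e3 : μ * ‖x - y‖ ^ 2 = μ * (‖x‖ ^ 2 - 2 * ⟪x, y⟫ + ‖y‖ ^ 2) := by rw [hsq x y]
  have i4 : ⟪f' x - f' y, y - x⟫ = -⟪f' x - f' y, x - y⟫ := by
    have h : y - x = -(x - y) := by abel
    rw [h, inner_neg_right]
  rw [i4]
  set w2 := ‖f' x - f' y‖ ^ 2
  set r2 := ‖x - y‖ ^ 2
  set ip := (⟪f' x - f' y, x - y⟫ : ℝ)
  have expand : 1 / (2 * (L - μ)) * (w2 - 2 * (μ * ip) + μ ^ 2 * r2) + μ / 2 * r2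
      = 1 / (2 * (L - μ)) * w2 + μ * L / (2 * (L - μ)) * r2 + μ / (L - μ) * (-ip) := by
    field_simp
    ring
  linarith
end
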